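/- arXiv:2105.02736 — 4 statements merged into one kernel-verified Lean document; each statement's English description precedes it below -/
import Mathlib

section
/- If the blob graph Blob(G) of a graph G contains an induced subgraph isomorphic to a path P_r on r vertices, then G itself contains an induced path on r vertices. -/
/-- The blob graph of `G`. -/
def Blob {V : Type*} (G : SimpleGraph V) :
    SimpleGraph {X : Set V // X.Nonempty ∧ (G.induce X).Connected} :=
  SimpleGraph.fromRel (fun A B =>
    ((A : Set V) ∩ (B : Set V)).Nonempty ∨
      ∃ x ∈ (A : Set V), ∃ y ∈ (B : Set V), G.Adj x y)

namespace BlobAux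

open SimpleGraph Walk

variable {V : Type*} {G : SimpleGraph V}

@[simp] lemma getVert_nil' {u : V} (n : ℕ) : (Walk.nil : G.Walk u u).getVert n = u :=
  Walk.getVert_of_length_le _ (by simp)

/-- Take the first `n` edges of a walk. -/
def wtake {u v : V} : (p : G.Walk u v) → (n : ℕ) → G.Walk u (p.getVert n)
  | p, 0 => Walk.nil.copy rfl (p.getVert_zero).symm
  | .nil, n + 1 => Walk.nil.copy rfl (Walk.getVert_of_length_le _ (by simp)).symm
  | .cons h q, n + 1 => (Walk.cons h (wtake q n)).copy rfl (getVert_cons_succ q h).symm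

/-- Drop the first `n` edges of a walk. -/
def wdrop {u v : V} : (p : G.Walk u v) → (n : ℕ) → G.Walk (p.getVert n) v
  | p, 0 => p.copy (p.getVert_zero).symm rfl
  | .nil, n + 1 => Walk.nil.copy (Walk.getVert_of_length_le _ (by simp)).symm rfl
  | .cons h q, n + 1 => (wdrop q n).copy (Walk.getVert_cons_succ q h).symm rfl

lemma length_wtake {u v : V} (p : G.Walk u v) (n : ℕ) (hn : n ≤ p.length) :
    (wtake p n).length = n := by
  induction p generalizing n with
  | nil =>
    have hn0 : n = 0 := by simpa using hn
    subst hn0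
    simp [wtake]
  | cons h q ih =>
    cases n with
    | zero => simp [wtake]
    | succ n =>
      simp only [wtake, length_copy, length_cons]
      rw [ih n (by simpa using hn)]

lemma length_wdrop {u v : V} (p : G.Walk u v) (n : ℕ) :
    (wdrop p n).length = p.length - n := by
  induction p generalizing n with
  | nil => cases n <;> simp [wdrop]
  | cons h q ih =>
    cases n with
    | zero => simp [wdrop]
    | succ n => simpa [wdrop] using ih n

lemma support_wtake {u v : V} (p : G.Walk u v) (n : ℕ) :
    ∀ z ∈ (wtake p n).support, z ∈ p.support := by
  induction p generalizing n with
  | nil => cases n <;> simp [wtake]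
  | cons h q ih =>
    cases n with
    | zero => simp [wtake]
    | succ n =>
      intro z hz
      simp only [wtake, support_copy, support_cons, List.mem_cons] at hz
      rcases hz with rfl | hz
      · simp
      · simp only [support_cons, List.mem_cons]
        exact Or.inr (ih n z hz)

lemma support_wdrop {u v : V} (p : G.Walk u v) (n : ℕ) :
    ∀ z ∈ (wdrop p n).support, z ∈ p.support := by
  induction p generalizing n with
  | nil => cases n <;> simp [wdrop]
  | cons h q ih =>
    cases n with
    | zero => simp [wdrop]
    | succ n =>
      intro z hz
      simp only [wdrop, support_copy] at hz
      simp only [support_cons, List.mem_cons]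
      exact Or.inr (ih n z hz)

lemma getVert_ne_of_isPath {u v : V} {p : G.Walk u v} (hp : p.IsPath) :
    ∀ i j, i < j → j ≤ p.length → p.getVert i ≠ p.getVert j := by
  induction p with
  | nil => intro i j hij hj; simp at hj; omega
  | cons h q ih =>
    intro i j hij hj heq
    rw [Walk.cons_isPath_iff] at hp
    cases i with
    | zero =>
      obtain ⟨j, rfl⟩ : ∃ j', j = j' + 1 := ⟨j - 1, by omega⟩
      rw [getVert_zero, getVert_cons_succ] at heq
      exact hp.2 (mem_support_iff_exists_getVert.mpr
        ⟨j, heq.symm, by simpa using Nat.le_of_succ_le_succ hj⟩)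
    | succ i =>
      obtain ⟨j, rfl⟩ : ∃ j', j = j' + 1 := ⟨j - 1, by omega⟩
      rw [getVert_cons_succ, getVert_cons_succ] at heq
      exact ih hp.1 i j (by omega) (by simpa using Nat.le_of_succ_le_succ hj) heq

/-- A walk inside a connected induced subgraph. -/
lemma walk_in_induce {X : Set V} (hc : (G.induce X).Connected) {x y : V}
    (hx : x ∈ X) (hy : y ∈ X) :
    ∃ p : G.Walk x y, ∀ z ∈ p.support, z ∈ X := by
  obtain ⟨q⟩ := hc ⟨x, hx⟩ ⟨y, hy⟩
  refine ⟨q.map (SimpleGraph.Embedding.induce X).toHom, ?_⟩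
  intro z hz
  replace hz : z ∈ (q.map (SimpleGraph.Embedding.induce X).toHom).support := hz
  rw [Walk.support_map] at hz
  obtain ⟨w, _, rfl⟩ := List.mem_map.mp hz
  exact w.2

end BlobAux

/-- If `Blob G` contains an induced path on `r` vertices, then so does `G`. -/
theorem induced_path_of_blob_induced_path {V : Type*} [Fintype V] (G : SimpleGraph V) (r : ℕ)
    (h : Nonempty (SimpleGraph.pathGraph r ↪g Blob G)) :
    Nonempty (SimpleGraph.pathGraph r ↪g G) := by
  classical
  open SimpleGraph Walk BlobAux in
  obtain ⟨e⟩ := h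
  match r with
  | 0 => exact ⟨⟨⟨Fin.elim0, fun {x} => x.elim0⟩, fun {x} => x.elim0⟩⟩
  | 1 =>
    obtain ⟨a, ha⟩ := (e 0).2.1
    refine ⟨⟨⟨fun _ => a, fun x y _ => Subsingleton.elim x y⟩, ?_⟩⟩
    intro i j
    constructor
    · intro hadj; exact absurd rfl hadj.ne
    · intro hadj
      rw [SimpleGraph.pathGraph_adj] at hadj
      omega
  | (n + 2) =>
    -- The blobs, as an ℕ-indexed predicate.
    set P : V → ℕ → Prop := fun x i => ∃ h : i < n + 2, x ∈ (e ⟨i, h⟩).1 with hP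
    set W : Set V := {x | ∃ i, P x i} with hWdef
    -- basic consequences of the embedding
    have hBne : ∀ i : Fin (n + 2), ((e i).1 : Set V).Nonempty := fun i => (e i).2.1
    have hBc : ∀ i : Fin (n + 2), (G.induce (e i).1).Connected := fun i => (e i).2.2
    have hfar : ∀ x y i j, P x i → P y j → (i + 1 < j ∨ j + 1 < i) →
        ¬ G.Adj x y ∧ x ≠ y := by
      intro x y i j ⟨hi, hxi⟩ ⟨hj, hyj⟩ hij
      have hne : (⟨i, hi⟩ : Fin (n + 2)) ≠ ⟨j, hj⟩ := by
        intro hcon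
        rw [Fin.mk.injEq] at hcon
        omega
      have hnadj : ¬ (SimpleGraph.pathGraph (n + 2)).Adj ⟨i, hi⟩ ⟨j, hj⟩ := by
        rw [SimpleGraph.pathGraph_adj]
        simp only [not_or]
        omega
      rw [← e.map_rel_iff] at hnadj
      unfold Blob at hnadj
      rw [SimpleGraph.fromRel_adj] at hnadj
      have hene : e ⟨i, hi⟩ ≠ e ⟨j, hj⟩ := fun hcon => hne (e.injective hcon)
      constructor
      · intro hadj
        exact hnadj ⟨hene, Or.inl (Or.inr ⟨x, hxi, y, hyj, hadj⟩)⟩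
      · rintro rfl
        exact hnadj ⟨hene, Or.inl (Or.inl ⟨x, hxi, hyj⟩)⟩
    -- min and max blob index of a vertex
    set f : V → ℕ := fun x => sInf {i | P x i} with hf
    set g : V → ℕ := fun x => sSup {i | P x i} with hg
    have hbdd : ∀ x : V, BddAbove {i | P x i} := by
      intro x
      refine ⟨n + 1, fun i hi => ?_⟩
      obtain ⟨hi', _⟩ := hi
      omega
    have hfP : ∀ x, x ∈ W → P x (f x) := fun x hx => Nat.sInf_mem hx
    have hgP : ∀ x, x ∈ W → P x (g x) := fun x hx => Nat.sSup_mem hx (hbdd x)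
    have hfg : ∀ x, x ∈ W → f x ≤ g x := fun x hx =>
      (Nat.sInf_le (Nat.sSup_mem hx (hbdd x)))
    have hedge : ∀ x y, x ∈ W → y ∈ W → G.Adj x y → g y ≤ f x + 1 := by
      intro x y hx hy hadj
      by_contra hcon
      exact (hfar x y (f x) (g y) (hfP x hx) (hgP y hy) (by omega)).1 hadj
    -- choose distinct endpoints a ∈ B 0, b ∈ B (n+1)
    have hab : ∃ a b, P a 0 ∧ P b (n + 1) ∧ a ≠ b := by
      by_cases hsub : ∀ x ∈ (e ⟨0, by omega⟩).1, x ∈ (e ⟨n + 1, by omega⟩).1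
      · have hne : (e ⟨0, by omega⟩).1 ≠ (e ⟨n + 1, by omega⟩).1 := by
          intro hcon
          have : (⟨0, by omega⟩ : Fin (n + 2)) = ⟨n + 1, by omega⟩ :=
            e.injective (Subtype.ext hcon)
          rw [Fin.mk.injEq] at this
          omega
        have : ∃ b ∈ (e ⟨n + 1, by omega⟩).1, b ∉ (e ⟨0, by omega⟩).1 := by
          by_contra hcon
          push_neg at hcon
          exact hne (Set.Subset.antisymm hsub hcon)
        obtain ⟨b, hb, hb0⟩ := this
        obtain ⟨a, ha⟩ := hBne ⟨0, by omega⟩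
        exact ⟨a, b, ⟨by omega, ha⟩, ⟨by omega, hb⟩, fun hcon => hb0 (hcon ▸ ha)⟩
      · push_neg at hsub
        obtain ⟨a, ha, ha'⟩ := hsub
        obtain ⟨b, hb⟩ := hBne ⟨n + 1, by omega⟩
        exact ⟨a, b, ⟨by omega, ha⟩, ⟨by omega, hb⟩, fun hcon => ha' (hcon ▸ hb)⟩
    obtain ⟨a, b, haP, hbP, hne⟩ := hab
    have haW : a ∈ W := ⟨0, haP⟩
    have hbW : b ∈ W := ⟨n + 1, hbP⟩
    -- existence of a walk from a to b inside W
    have hreach : ∀ i (hi : i < n + 2), ∀ c, c ∈ (e ⟨i, hi⟩).1 →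
        ∃ p : G.Walk a c, ∀ z ∈ p.support, z ∈ W := by
      intro i
      induction i with
      | zero =>
        intro hi c hc
        obtain ⟨p, hp⟩ := walk_in_induce (hBc ⟨0, hi⟩) haP.2 hc
        exact ⟨p, fun z hz => ⟨0, hi, hp z hz⟩⟩
      | succ i ih =>
        intro hi c hc
        have hadj : (SimpleGraph.pathGraph (n + 2)).Adj ⟨i, by omega⟩ ⟨i + 1, hi⟩ := by
          rw [SimpleGraph.pathGraph_adj]; left; rfl
        rw [← e.map_rel_iff] at hadj
        unfold Blob at hadj
        rw [SimpleGraph.fromRel_adj] at hadj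
        obtain ⟨-, hrel⟩ := hadj
        have hcontact : ∃ x y, x ∈ (e ⟨i, by omega⟩).1 ∧ y ∈ (e ⟨i + 1, hi⟩).1 ∧
            (x = y ∨ G.Adj x y) := by
          rcases hrel with (⟨x, hx1, hx2⟩ | ⟨x, hx, y, hy, hxy⟩) |
            (⟨x, hx1, hx2⟩ | ⟨x, hx, y, hy, hxy⟩)
          · exact ⟨x, x, hx1, hx2, Or.inl rfl⟩
          · exact ⟨x, y, hx, hy, Or.inr hxy⟩
          · exact ⟨x, x, hx2, hx1, Or.inl rfl⟩
          · exact ⟨y, x, hy, hx, Or.inr hxy.symm⟩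
        obtain ⟨x, y, hx, hy, hxy⟩ := hcontact
        obtain ⟨p₁, hp₁⟩ := ih (by omega) x hx
        obtain ⟨p₂, hp₂⟩ := walk_in_induce (hBc ⟨i + 1, hi⟩) hy hc
        rcases hxy with rfl | hxy
        · refine ⟨p₁.append p₂, ?_⟩
          intro z hz
          rcases (Walk.mem_support_append_iff _ _).mp hz with hz | hz
          · exact hp₁ z hz
          · exact ⟨i + 1, hi, hp₂ z hz⟩
        · refine ⟨p₁.append (Walk.cons hxy p₂), ?_⟩
          intro z hz
          rcases (Walk.mem_support_append_iff _ _).mp hz with hz | hz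
          · exact hp₁ z hz
          · rw [Walk.support_cons] at hz
            rcases List.mem_cons.mp hz with rfl | hz'
            · exact hp₁ _ (Walk.end_mem_support p₁)
            · exact ⟨i + 1, hi, hp₂ _ hz'⟩
    -- the set of lengths of walks from a to b inside W
    set S : Set ℕ := {k | ∃ p : G.Walk a b, (∀ z ∈ p.support, z ∈ W) ∧ p.length = k}
      with hS
    have hSne : S.Nonempty := by
      obtain ⟨p, hp⟩ := hreach (n + 1) (by omega) b hbP.2
      exact ⟨p.length, p, hp, rfl⟩
    obtain ⟨p₀, hp₀W, hp₀len⟩ : sInf S ∈ S := Nat.sInf_mem hSne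
    set p : G.Walk a b := p₀.bypass with hpdef
    have hpW : ∀ z ∈ p.support, z ∈ W := fun z hz =>
      hp₀W z (Walk.support_bypass_subset p₀ hz)
    have hppath : p.IsPath := Walk.bypass_isPath p₀
    have hmin : ∀ q : G.Walk a b, (∀ z ∈ q.support, z ∈ W) → p.length ≤ q.length := by
      intro q hq
      have h1 : p.length ≤ sInf S := hp₀len ▸ Walk.length_bypass_le p₀
      exact h1.trans (Nat.sInf_le ⟨q, hq, rfl⟩)
    set u : ℕ → V := fun i => p.getVert i with hu
    have huW : ∀ i, u i ∈ W := by
      intro i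
      by_cases hi : i ≤ p.length
      · exact hpW _ (Walk.mem_support_iff_exists_getVert.mpr ⟨i, rfl, hi⟩)
      · have : u i = b := Walk.getVert_of_length_le p (by omega)
        rw [this]; exact hbW
    have hstep : ∀ i, i < p.length → G.Adj (u i) (u (i + 1)) := fun i hi =>
      Walk.adj_getVert_succ p hi
    -- the potential argument: p.length ≥ n + 1
    have hfi : ∀ i, i ≤ p.length → f (u i) ≤ i := by
      intro i
      induction i with
      | zero =>
        intro _
        have : u 0 = a := Walk.getVert_zero p
        rw [this]
        exact Nat.sInf_le haP
      | succ i ih =>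
        intro hi
        have h1 : g (u (i + 1)) ≤ f (u i) + 1 :=
          hedge _ _ (huW i) (huW (i + 1)) (hstep i (by omega))
        have h2 : f (u (i + 1)) ≤ g (u (i + 1)) := hfg _ (huW (i + 1))
        have h3 : f (u i) ≤ i := ih (by omega)
        omega
    have hlen1 : 1 ≤ p.length := by
      by_contra hcon
      have h0 : p.length = 0 := by omega
      exact hne (Walk.eq_of_length_eq_zero h0)
    have hklen : n + 1 ≤ p.length := by
      have h1 : n + 1 ≤ g b := le_csSup (hbdd b) hbP
      have hub : u p.length = b := Walk.getVert_length p
      have h2 : g (u p.length) ≤ f (u (p.length - 1)) + 1 := by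
        refine hedge _ _ (huW _) (huW _) ?_
        have := hstep (p.length - 1) (by omega)
        rwa [Nat.sub_add_cancel hlen1] at this
      have h3 : f (u (p.length - 1)) ≤ p.length - 1 := hfi _ (by omega)
      rw [hub] at h2
      omega
    -- no chords
    have hchord : ∀ i j, i + 1 < j → j ≤ p.length → ¬ G.Adj (u i) (u j) := by
      intro i j hij hj hadj
      set q : G.Walk a b :=
        (wtake p i).append (Walk.cons hadj (wdrop p j)) with hq
      have hqW : ∀ z ∈ q.support, z ∈ W := by
        intro z hz
        rcases (Walk.mem_support_append_iff _ _).mp hz with hz | hz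
        · exact hpW z (support_wtake p i z hz)
        · rw [Walk.support_cons] at hz
          rcases List.mem_cons.mp hz with rfl | hz'
          · exact huW i
          · exact hpW _ (support_wdrop p j _ hz')
      have hqlen : q.length = i + 1 + (p.length - j) := by
        rw [hq, Walk.length_append, Walk.length_cons, length_wtake p i (by omega),
          length_wdrop p j]
        omega
      have := hmin q hqW
      omega
    -- build the embedding
    have hinj : Function.Injective (fun i : Fin (n + 2) => u i.val) := by
      intro i j hij
      have hi2 := i.isLt
      have hj2 := j.isLt
      by_contra hcon
      have hij' : (i : ℕ) ≠ (j : ℕ) := fun h' => hcon (Fin.ext h')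
      rcases Nat.lt_or_ge (i : ℕ) (j : ℕ) with h' | h'
      · exact getVert_ne_of_isPath hppath i j h' (by omega) hij
      · exact getVert_ne_of_isPath hppath j i (by omega) (by omega) hij.symm
    refine ⟨⟨⟨fun i => u i.val, hinj⟩, ?_⟩⟩
    intro i j
    have hi2 := i.isLt
    have hj2 := j.isLt
    simp only [Function.Embedding.coeFn_mk]
    rw [SimpleGraph.pathGraph_adj]
    constructor
    · intro hadj
      rcases Nat.lt_trichotomy (i : ℕ) (j : ℕ) with h' | h' | h'
      · rcases Nat.lt_or_ge ((i : ℕ) + 1) (j : ℕ) with h'' | h''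
        · exact absurd hadj (hchord i j h'' (by omega))
        · left; omega
      · exfalso
        rw [h'] at hadj
        exact G.loopless.irrefl _ hadj
      · rcases Nat.lt_or_ge ((j : ℕ) + 1) (i : ℕ) with h'' | h''
        · exact absurd hadj.symm (hchord j i h'' (by omega))
        · right; omega
    · intro hadj
      rcases hadj with h' | h'
      · have hs := hstep i (by omega)
        rwa [h'] at hs
      · have hs := (hstep j (by omega)).symm
        rwa [h'] at hs
end

section
/- Let L be the line graph of a graph G, and let D be a connected induced subgraph of L that is an odd cactus (every block of D is an edge or an odd cycle) and contains a cycle C on at least 5 vertices. Then D has no vertices outside C, i.e., D equals the cycle C. -/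
/-- `B` induces a biconnected subgraph of `G`. -/
def IsBiconnectedSet {V : Type*} (G : SimpleGraph V) (B : Set V) : Prop :=
  2 ≤ B.ncard ∧ (G.induce B).Connected ∧ ∀ v ∈ B, (G.induce (B \ {v})).Preconnected

/-- A block of `G`: a maximal biconnected subgraph. -/
def IsBlock {V : Type*} (G : SimpleGraph V) (B : Set V) : Prop :=
  IsBiconnectedSet G B ∧ ∀ B', IsBiconnectedSet G B' → B ⊆ B' → B = B'

/-- An odd cactus: every block is an edge or an odd cycle. -/
def IsOddCactus {V : Type*} (G : SimpleGraph V) : Prop :=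
  ∀ B : Set V, IsBlock G B →
    Nonempty ((G.induce B) ≃g (⊤ : SimpleGraph (Fin 2))) ∨
      ∃ k : ℕ, 1 ≤ k ∧ Nonempty ((G.induce B) ≃g SimpleGraph.cycleGraph (2 * k + 1))

open SimpleGraph

section Helpers
variable {W : Type*} {H : SimpleGraph W}

/-- A walk whose support lies in `T` gives reachability in `H.induce T`. -/
lemma reachable_induce_of_support {T : Set W} {x y : W} (p : H.Walk x y)
    (hsub : ∀ z ∈ p.support, z ∈ T) :
    (H.induce T).Reachable ⟨x, hsub x p.start_mem_support⟩ ⟨y, hsub y p.end_mem_support⟩ := by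
  induction p with
  | nil => rfl
  | @cons a b d h p ih =>
      have hb : b ∈ T := hsub b (by simp)
      have h1 : (H.induce T).Adj ⟨a, hsub a (by simp)⟩ ⟨b, hb⟩ := by
        simpa using h
      exact h1.reachable.trans (ih (fun z hz => hsub z (by simp [hz])))

/-- A walk from inside `T` to outside `T` crosses an edge of `H`. -/
lemma exists_crossing_edge {T : Set W} {x y : W} (p : H.Walk x y)
    (hx : x ∈ T) (hy : y ∉ T) : ∃ a b, a ∈ T ∧ b ∉ T ∧ H.Adj a b := by
  induction p with
  | nil => exact absurd hx hy
  | @cons a b d h p ih =>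
      by_cases hb : b ∈ T
      · exact ih hb hy
      · exact ⟨a, b, hx, hb, h⟩

lemma reachable_induce_mono {T T' : Set W} (hTT : T ⊆ T') {x y : ↥T}
    (h : (H.induce T).Reachable x y) :
    (H.induce T').Reachable ⟨x, hTT x.2⟩ ⟨y, hTT y.2⟩ :=
  h.map (induceHomOfLE H hTT).toHom

end Helpers

section Cycle
variable {W : Type*} [DecidableEq W] {H : SimpleGraph W}

lemma length_rotate' {u v : W} (c : H.Walk v v) (h : u ∈ c.support) :
    (c.rotate u h).length = c.length := by
  have h2 := congr_arg Walk.length (c.take_spec h)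
  rw [Walk.length_append] at h2
  simp only [Walk.rotate, Walk.length_append, ← h2]
  omega

lemma mem_support_of_mem_rotate {u v z : W} {c : H.Walk v v} (h : u ∈ c.support)
    (hz : z ∈ (c.rotate u h).support) : z ∈ c.support := by
  rw [Walk.support_eq_cons (c.rotate u h), List.mem_cons] at hz
  rcases hz with rfl | hz'
  · exact h
  · have := (Walk.support_rotate c u h).mem_iff.mp hz'
    exact List.mem_of_mem_tail this

/-- A cycle of length ≥ 3 gives two distinct neighbors of its basepoint on its support. -/
lemma cycle_start_neighbors {u : W} {d : H.Walk u u} (hd : d.IsCycle) (hlen : 4 ≤ d.length) :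
    ∃ n1 n2, n1 ≠ n2 ∧ n1 ∈ d.support ∧ n2 ∈ d.support ∧ H.Adj u n1 ∧ H.Adj u n2 := by
  cases d with
  | nil => exact absurd hd Walk.IsCycle.not_of_nil
  | @cons _ b _ h q =>
      have hq : q.IsPath := ((Walk.cons_isCycle_iff q h).mp hd).1
      have hqr : q.reverse.IsPath := hq.reverse
      have hqrlen : q.reverse.length = q.length := q.length_reverse
      have hqlen : 3 ≤ q.length := by
        simp only [Walk.length_cons] at hlen; omega
      have hnn : ¬ q.reverse.Nil := by
        rw [Walk.not_nil_iff_lt_length]; omega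
      obtain ⟨w, h2, q2, hq2⟩ := Walk.not_nil_iff.mp hnn
      refine ⟨b, w, ?_, by simp, ?_, h, h2⟩
      · rintro rfl
        have hp2 : q2.IsPath := by
          have := hq2 ▸ hqr
          exact this.of_cons
        have : q2 = Walk.nil := (Walk.isPath_iff_eq_nil (p := q2)).mp hp2
        rw [this] at hq2
        have := hq2 ▸ hqrlen
        simp at this
        omega
      · have : w ∈ q.reverse.support := by rw [hq2]; simp
        rw [Walk.support_reverse, List.mem_reverse] at this
        exact List.mem_cons_of_mem _ this

/-- Any vertex on a long cycle has two distinct neighbors on the cycle. -/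
lemma cycle_neighbors {v u : W} {c : H.Walk v v} (hc : c.IsCycle) (hu : u ∈ c.support)
    (hlen : 4 ≤ c.length) :
    ∃ n1 n2, n1 ≠ n2 ∧ n1 ∈ c.support ∧ n2 ∈ c.support ∧ H.Adj u n1 ∧ H.Adj u n2 := by
  obtain ⟨n1, n2, h12, hm1, hm2, ha1, ha2⟩ :=
    cycle_start_neighbors (hc.rotate hu) (by rw [length_rotate']; omega)
  exact ⟨n1, n2, h12, mem_support_of_mem_rotate hu hm1, mem_support_of_mem_rotate hu hm2, ha1, ha2⟩

end Cycle

section ClawFree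
open SimpleGraph

/-- Line graphs contain no claws: among three neighbors of a vertex, two coincide or
are adjacent. -/
lemma lineGraph_no_claw {V : Type*} {G : SimpleGraph V} {u a b y : G.edgeSet}
    (ha : (G.lineGraph).Adj u a) (hb : (G.lineGraph).Adj u b)
    (hy : (G.lineGraph).Adj u y) :
    (G.lineGraph).Adj a b ∨ (G.lineGraph).Adj a y ∨ (G.lineGraph).Adj b y ∨
      a = b ∨ a = y ∨ b = y := by
  obtain ⟨hna, va, hvau, hvaa⟩ := lineGraph_adj_iff_exists.mp ha
  obtain ⟨hnb, vb, hvbu, hvbb⟩ := lineGraph_adj_iff_exists.mp hb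
  obtain ⟨hny, vy, hvyu, hvyy⟩ := lineGraph_adj_iff_exists.mp hy
  obtain ⟨t, ht⟩ := Sym2.mem_iff_exists.mp hvau
  rw [ht, Sym2.mem_iff] at hvbu hvyu
  have key : ∀ (e f : G.edgeSet) (w : V), w ∈ (e : Sym2 V) → w ∈ (f : Sym2 V) →
      (G.lineGraph).Adj e f ∨ e = f := by
    intro e f w hwe hwf
    by_cases hef : e = f
    · exact Or.inr hef
    · exact Or.inl (lineGraph_adj_iff_exists.mpr ⟨hef, w, hwe, hwf⟩)
  rcases hvbu with rfl | rfl
  · rcases key a b vb hvaa hvbb with h | h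
    · exact Or.inl h
    · exact Or.inr (Or.inr (Or.inr (Or.inl h)))
  · rcases hvyu with rfl | rfl
    · rcases key a y vy hvaa hvyy with h | h
      · exact Or.inr (Or.inl h)
      · exact Or.inr (Or.inr (Or.inr (Or.inr (Or.inl h))))
    · rcases key b y vy hvbb hvyy with h | h
      · exact Or.inr (Or.inr (Or.inl h))
      · exact Or.inr (Or.inr (Or.inr (Or.inr (Or.inr h))))

end ClawFree

section Insert
variable {W : Type*} [Finite W] {H : SimpleGraph W}

open scoped Classical in
lemma biconnectedSet_insert {B : Set W} (hB : IsBiconnectedSet H B)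
    {y u n : W} (hyB : y ∉ B) (huB : u ∈ B) (hnB : n ∈ B) (hun : u ≠ n)
    (hyu : H.Adj y u) (hyn : H.Adj y n) : IsBiconnectedSet H (insert y B) := by
  obtain ⟨hcard, hconn, hdel⟩ := hB
  refine ⟨le_trans hcard (Set.ncard_le_ncard (Set.subset_insert y B) (Set.toFinite _)), ?_, ?_⟩
  · have h1 : (H.induce (B ∪ {u, y})).Connected :=
      connected_induce_union hconn.preconnected (induce_pair_connected_of_adj hyu.symm).preconnected huB
        (by simp) hyu.symm
    have h2 : B ∪ {u, y} = insert y B := by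
      ext z; simp only [Set.mem_union, Set.mem_insert_iff, Set.mem_singleton_iff]
      constructor
      · rintro (hz | rfl | rfl) <;> simp [huB, *]
      · rintro (rfl | hz) <;> simp [*]
    rwa [h2] at h1
  · intro v hv
    rcases Set.mem_insert_iff.mp hv with rfl | hvB
    · rw [Set.insert_diff_self_of_notMem hyB]
      exact hconn.preconnected
    · have hyv : y ≠ v := fun h => hyB (h ▸ hvB)
      have hT : insert y B \ {v} = insert y (B \ {v}) := by
        ext z
        simp only [Set.mem_diff, Set.mem_insert_iff, Set.mem_singleton_iff]
        constructor
        · rintro ⟨rfl | hz, hzv⟩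
          · exact Or.inl rfl
          · exact Or.inr ⟨hz, hzv⟩
        · rintro (rfl | ⟨hz, hzv⟩)
          · exact ⟨Or.inl rfl, hyv⟩
          · exact ⟨Or.inr hz, hzv⟩
      rw [hT]
      set m : W := if u = v then n else u with hm
      have hmB : m ∈ B \ {v} := by
        rw [hm]; split_ifs with h
        · exact ⟨hnB, fun h2 => hun (h.trans h2.symm)⟩
        · exact ⟨huB, h⟩
      have hym : H.Adj y m := by
        rw [hm]; split_ifs; exacts [hyn, hyu]
      have key : ∀ z (hz : z ∈ Insert.insert y (B \ {v})),
          (H.induce (Insert.insert y (B \ {v}))).Reachable ⟨z, hz⟩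
            ⟨m, Set.mem_insert_of_mem y hmB⟩ := by
        intro z hz
        rcases Set.mem_insert_iff.mp hz with rfl | hzB
        · exact SimpleGraph.Adj.reachable (by simpa using hym)
        · have := hdel v hvB ⟨z, hzB⟩ ⟨m, hmB⟩
          exact reachable_induce_mono (Set.subset_insert _ _) this
      intro z z'
      exact (key z z.2).trans (key z' z'.2).symm

end Insert

section FinCycle
open SimpleGraph
open Fin.CommRing

lemma cycleGraph_adj_cases {m : ℕ} {x z : Fin (m + 2)}
    (h : (cycleGraph (m + 2)).Adj x z) : z = x + 1 ∨ z = x - 1 := by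
  rw [cycleGraph_adj] at h
  rcases h with h | h
  · exact Or.inr (by linear_combination -h)
  · exact Or.inl (by linear_combination h)

lemma cycleGraph_three_neighbors_false {m : ℕ} {x z1 z2 z3 : Fin (m + 2)}
    (h1 : (cycleGraph (m + 2)).Adj x z1) (h2 : (cycleGraph (m + 2)).Adj x z2)
    (h3 : (cycleGraph (m + 2)).Adj x z3)
    (h12 : z1 ≠ z2) (h13 : z1 ≠ z3) (h23 : z2 ≠ z3) : False := by
  rcases cycleGraph_adj_cases h1 with e1 | e1 <;>
    rcases cycleGraph_adj_cases h2 with e2 | e2 <;>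
      rcases cycleGraph_adj_cases h3 with e3 | e3 <;>
        first
          | exact h12 (e1.trans e2.symm)
          | exact h13 (e1.trans e3.symm)
          | exact h23 (e2.trans e3.symm)

lemma cycleGraph_neighbors_not_adj {m : ℕ} {x z1 z2 : Fin (m + 5)}
    (h1 : (cycleGraph (m + 5)).Adj x z1) (h2 : (cycleGraph (m + 5)).Adj x z2)
    (hne : z1 ≠ z2) : ¬ (cycleGraph (m + 5)).Adj z1 z2 := by
  intro hadj
  have key : ∀ a b : Fin (m + 5), a = x + 1 → b = x - 1 →
      ¬ (cycleGraph (m + 5)).Adj a b := by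
    rintro a b rfl rfl hab
    rw [cycleGraph_adj] at hab
    rcases hab with h | h
    · have h0 : (1 : Fin (m + 5)) = 0 := by linear_combination h
      exact one_ne_zero h0
    · have h0 : (3 : Fin (m + 5)) = 0 := by linear_combination -h
      have h3 : ((3 : ℕ) : Fin (m + 5)) = 0 := by exact_mod_cast h0
      have hv := congrArg Fin.val h3
      rw [Fin.val_natCast] at hv
      rw [Nat.mod_eq_of_lt (by omega)] at hv
      simp at hv
  rcases cycleGraph_adj_cases h1 with e1 | e1 <;> rcases cycleGraph_adj_cases h2 with e2 | e2
  · exact hne (e1.trans e2.symm)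
  · exact key z1 z2 e1 e2 hadj
  · exact key z2 z1 e2 e1 hadj.symm
  · exact hne (e1.trans e2.symm)

end FinCycle

section CycleBiconnected
open SimpleGraph
variable {W : Type*} [Finite W] [DecidableEq W] {H : SimpleGraph W}

lemma end_mem_support_tail {v : W} (c : H.Walk v v) (hnil : ¬ c.Nil) :
    v ∈ c.support.tail := by
  rw [← c.support_tail_of_not_nil hnil]
  exact Walk.end_mem_support _

lemma mem_rotate_iff {u v z : W} {c : H.Walk v v} (hnil : ¬ c.Nil) (h : u ∈ c.support) :
    z ∈ (c.rotate u h).support ↔ z ∈ c.support := by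
  have hrot := Walk.support_rotate c u h
  constructor
  · intro hz
    rw [Walk.support_eq_cons (c.rotate u h), List.mem_cons] at hz
    rcases hz with rfl | hz
    · exact h
    · exact List.mem_of_mem_tail (hrot.mem_iff.mp hz)
  · intro hz
    rw [c.support_eq_cons, List.mem_cons] at hz
    rcases hz with rfl | hz
    · exact List.mem_of_mem_tail (hrot.mem_iff.mpr (end_mem_support_tail c hnil))
    · exact List.mem_of_mem_tail (hrot.mem_iff.mpr hz)

lemma cycle_support_biconnected {v : W} {c : H.Walk v v} (hc : c.IsCycle) :
    IsBiconnectedSet H {z | z ∈ c.support} := by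
  have hnil : ¬ c.Nil := hc.not_nil
  refine ⟨?_, c.connected_induce_support, ?_⟩
  · obtain ⟨b, hadj, q, hceq⟩ := Walk.not_nil_iff.mp hnil
    have : 1 < Set.ncard {z | z ∈ c.support} := by
      rw [Set.one_lt_ncard_iff (Set.toFinite _)]
      exact ⟨v, b, c.start_mem_support, by rw [hceq]; simp, hadj.ne⟩
    omega
  · intro u hu
    have hu' : u ∈ c.support := hu
    have hd := hc.rotate hu'
    have hdnil : ¬ (c.rotate u hu').Nil := hd.not_nil
    obtain ⟨b, hadj, q, hdeq⟩ := Walk.not_nil_iff.mp hdnil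
    have hq : q.IsPath := ((Walk.cons_isCycle_iff q hadj).mp (hdeq ▸ hd)).1
    have hqlen : 2 ≤ q.length := by
      have h1 : (c.rotate u hu').length = c.length := length_rotate' c hu'
      have h2 : (c.rotate u hu').length = q.length + 1 := by rw [hdeq]; simp
      have h3 := hc.three_le_length
      omega
    have hqrnil : ¬ q.reverse.Nil := by
      rw [Walk.not_nil_iff_lt_length, Walk.length_reverse]; omega
    obtain ⟨w, h2, q2, hqreq⟩ := Walk.not_nil_iff.mp hqrnil
    -- `r` is the path `q` with its final vertex `u` removed
    set r : H.Walk b w := q2.reverse with hr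
    have hqeq : q = r.concat h2.symm := by
      have := congrArg Walk.reverse hqreq
      rw [Walk.reverse_reverse] at this
      rw [this, Walk.reverse_cons, Walk.concat_eq_append]
    have hqsupp : q.support = r.support ++ [u] := by
      rw [hqeq, Walk.support_concat]
    have hunotr : u ∉ r.support := by
      have hnd : q.support.Nodup := hq.support_nodup
      rw [hqsupp] at hnd
      intro hmem
      exact (List.disjoint_of_nodup_append hnd) hmem (by simp)
    have hset : {z | z ∈ c.support} \ {u} = {z | z ∈ r.support} := by
      ext z
      simp only [Set.mem_diff, Set.mem_setOf_eq, Set.mem_singleton_iff]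
      rw [← mem_rotate_iff hnil hu', hdeq, Walk.support_cons, List.mem_cons, hqsupp,
        List.mem_append]
      constructor
      · rintro ⟨rfl | hz | hz, hzu⟩
        · exact absurd rfl hzu
        · exact hz
        · simp at hz; exact absurd hz hzu
      · intro hz
        exact ⟨Or.inr (Or.inl hz), fun h => hunotr (h ▸ hz)⟩
    rw [hset]
    exact (r.connected_induce_support).preconnected

end CycleBiconnected
/-- A connected induced odd-cactus subgraph of a line graph containing a cycle on
at least 5 vertices has no vertices outside that cycle. -/
theorem oddCactus_in_lineGraph_eq_long_cycle {V : Type*} [Fintype V] (G : SimpleGraph V)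
    (D : Set G.edgeSet)
    (hconn : ((G.lineGraph).induce D).Connected)
    (hcactus : IsOddCactus ((G.lineGraph).induce D))
    (v : D) (c : ((G.lineGraph).induce D).Walk v v)
    (hc : c.IsCycle) (hlen : 5 ≤ c.length) :
    ∀ x : D, x ∈ c.support := by
  classical
  let H : SimpleGraph ↥D := (G.lineGraph).induce D
  let S : Set ↥D := {z | z ∈ c.support}
  -- basic facts about `S`
  have hSbic : IsBiconnectedSet H S := cycle_support_biconnected hc
  have hScard : 5 ≤ S.ncard := by
    have hnd : c.support.tail.Nodup := hc.support_nodup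
    have hsub : (↑c.support.tail.toFinset : Set ↥D) ⊆ S := by
      intro z hz
      simp only [Finset.coe_sort_coe, List.coe_toFinset, Set.mem_setOf_eq] at hz
      exact List.mem_of_mem_tail hz
    have h1 : c.support.tail.toFinset.card = c.length := by
      rw [List.toFinset_card_of_nodup hnd]
      have := c.length_support
      have := List.length_tail (l := c.support)
      omega
    calc 5 ≤ c.length := hlen
      _ = (↑c.support.tail.toFinset : Set ↥D).ncard := by
            rw [Set.ncard_coe_finset, h1]
      _ ≤ S.ncard := Set.ncard_le_ncard hsub (Set.toFinite _)
  -- a maximal biconnected set containing `S`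
  obtain ⟨B, hBmem, hBmax⟩ := Set.Finite.exists_maximalFor Set.ncard
    {B' : Set ↥D | IsBiconnectedSet H B' ∧ S ⊆ B'} (Set.toFinite _)
    ⟨S, hSbic, subset_rfl⟩
  obtain ⟨hBbic, hSB⟩ := hBmem
  have hblock : IsBlock H B := by
    refine ⟨hBbic, fun B' hB' hsub => ?_⟩
    have hle : B.ncard ≤ B'.ncard := Set.ncard_le_ncard hsub (Set.toFinite _)
    have heq := hBmax ⟨hB', hSB.trans hsub⟩ hle
    exact Set.eq_of_subset_of_ncard_le hsub heq (Set.toFinite _)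
  have hBcard : 5 ≤ B.ncard := le_trans hScard (Set.ncard_le_ncard hSB (Set.toFinite _))
  -- the block is an odd cycle of length `2*j+5`
  obtain ⟨j, f⟩ : ∃ j : ℕ, Nonempty ((H.induce B) ≃g SimpleGraph.cycleGraph (2 * j + 5)) := by
    rcases hcactus B hblock with hg | ⟨k, hk, hg⟩ <;> obtain ⟨g⟩ := hg
    · exfalso
      have : B.ncard = 2 := by
        rw [← Nat.card_coe_set_eq, Nat.card_congr g.toEquiv]
        simp [Nat.card_eq_fintype_card]
      omega
    · have hcardB : B.ncard = 2 * k + 1 := by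
        rw [← Nat.card_coe_set_eq, Nat.card_congr g.toEquiv]
        simp [Nat.card_eq_fintype_card]
      obtain ⟨j, rfl⟩ : ∃ j, k = j + 2 := ⟨k - 2, by omega⟩
      have hn : 2 * (j + 2) + 1 = 2 * j + 5 := by ring
      rw [hn] at g
      exact ⟨j, ⟨g⟩⟩
  obtain ⟨f⟩ := f
  -- `S = B`
  have hBS : B ⊆ S := by
    by_contra hns
    obtain ⟨w, hwB, hwS⟩ := Set.not_subset.mp hns
    have hvB : (v : ↥D) ∈ B := hSB c.start_mem_support
    obtain ⟨p⟩ := hBbic.2.1.preconnected ⟨v, hvB⟩ ⟨w, hwB⟩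
    obtain ⟨a, b, haS, hbS, hab⟩ :=
      exists_crossing_edge (T := {z : ↥B | (z : ↥D) ∈ S}) p c.start_mem_support hwS
    have haS' : (a : ↥D) ∈ c.support := haS
    obtain ⟨n1, n2, h12, hm1, hm2, ha1, ha2⟩ :=
      cycle_neighbors hc haS' (by omega)
    have ha1' : (H.induce B).Adj a ⟨n1, hSB hm1⟩ := ha1
    have ha2' : (H.induce B).Adj a ⟨n2, hSB hm2⟩ := ha2
    refine cycleGraph_three_neighbors_false (f.map_adj_iff.mpr ha1')
      (f.map_adj_iff.mpr ha2') (f.map_adj_iff.mpr hab) ?_ ?_ ?_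
    · simp only [ne_eq, EmbeddingLike.apply_eq_iff_eq]
      intro h; exact h12 (congrArg Subtype.val h)
    · simp only [ne_eq, EmbeddingLike.apply_eq_iff_eq]
      intro h
      exact hbS (by rw [← h]; exact hm1)
    · simp only [ne_eq, EmbeddingLike.apply_eq_iff_eq]
      intro h
      exact hbS (by rw [← h]; exact hm2)
  have hSeqB : S = B := le_antisymm hSB hBS
  -- final claw-free argument
  intro x
  by_contra hx
  have hxS : x ∉ S := hx
  obtain ⟨p⟩ := hconn.preconnected v x
  obtain ⟨u, y, huS, hyS, huy⟩ :=
    exists_crossing_edge (T := S) p c.start_mem_support hxS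
  have huS' : u ∈ c.support := huS
  obtain ⟨n1, n2, h12, hm1, hm2, ha1, ha2⟩ := cycle_neighbors hc huS' (by omega)
  -- no two cycle-neighbours are adjacent, via the block structure
  have hadj_n12 : ¬ H.Adj n1 n2 := by
    intro hadj
    have h1' : (H.induce B).Adj ⟨u, hSB huS⟩ ⟨n1, hSB hm1⟩ := ha1
    have h2' : (H.induce B).Adj ⟨u, hSB huS⟩ ⟨n2, hSB hm2⟩ := ha2
    have h3' : (H.induce B).Adj ⟨n1, hSB hm1⟩ ⟨n2, hSB hm2⟩ := hadj
    refine cycleGraph_neighbors_not_adj (f.map_adj_iff.mpr h1') (f.map_adj_iff.mpr h2')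
      ?_ (f.map_adj_iff.mpr h3')
    simp only [ne_eq, EmbeddingLike.apply_eq_iff_eq]
    intro h; exact h12 (congrArg Subtype.val h)
  -- attaching `y` to the block contradicts maximality
  have hattach : ∀ n : ↥D, n ∈ S → H.Adj u n → ¬ H.Adj n y := by
    intro n hnS hun hny
    have hbi : IsBiconnectedSet H (insert y B) :=
      biconnectedSet_insert hBbic (hSeqB ▸ hyS) (hSB huS) (hSB hnS) hun.ne
        huy.symm hny.symm
    have := hblock.2 (insert y B) hbi (Set.subset_insert y B)
    exact (hSeqB ▸ hyS) (this ▸ Set.mem_insert y B)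
  -- the claw
  have hclaw := lineGraph_no_claw (u := (u : G.edgeSet)) (a := (n1 : G.edgeSet))
    (b := (n2 : G.edgeSet)) (y := (y : G.edgeSet)) ha1 ha2 huy
  rcases hclaw with h | h | h | h | h | h
  · exact hadj_n12 h
  · exact hattach n1 hm1 ha1 h
  · exact hattach n2 hm2 ha2 h
  · exact h12 (Subtype.ext h)
  · exact hyS (by rw [show y = n1 from Subtype.ext h.symm]; exact hm1)
  · exact hyS (by rw [show y = n2 from Subtype.ext h.symm]; exact hm2)
end

section
/- Subdividing every edge of a graph G exactly 2p times (for p ≥ 1) yields a graph G′ whose minimum even cycle transversal has the same size as the minimum even cycle transversal of G, and G′ has girth greater than p (provided G has a cycle). -/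
/-- Auxiliary relation describing the graph obtained from `G` by subdividing
every edge exactly `t` times: each edge `uv` (oriented from its smaller to its
larger endpoint) is replaced by the path `u, (e,0), (e,1), …, (e,t-1), v`. -/
def SubdivRel {V : Type*} [LinearOrder V] (G : SimpleGraph V) (t : ℕ) :
    (V ⊕ G.edgeSet × Fin t) → (V ⊕ G.edgeSet × Fin t) → Prop
  | Sum.inl u, Sum.inr (e, i) =>
      (i.val = 0 ∧ u = Sym2.inf (e : Sym2 V)) ∨ (i.val = t - 1 ∧ u = Sym2.sup (e : Sym2 V))
  | Sum.inr (e, i), Sum.inr (f, j) => e = f ∧ i.val + 1 = j.val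
  | _, _ => False

/-- The graph obtained from `G` by subdividing every edge exactly `t` times. -/
def Subdivision {V : Type*} [LinearOrder V] (G : SimpleGraph V) (t : ℕ) :
    SimpleGraph (V ⊕ G.edgeSet × Fin t) :=
  SimpleGraph.fromRel (SubdivRel G t)

/-- `S` is an even cycle transversal of `H`: it meets every even cycle. -/
def IsEvenCycleTransversal {W : Type*} (H : SimpleGraph W) (S : Set W) : Prop :=
  ∀ (v : W) (w : H.Walk v v), w.IsCycle → Even w.length → ∃ x ∈ S, x ∈ w.support

namespace Subdiv

open SimpleGraph Sum

variable {V : Type*} [LinearOrder V] {G : SimpleGraph V} {t : ℕ}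

lemma sym2_mk_inf_sup (s : Sym2 V) : s(Sym2.inf s, Sym2.sup s) = s := by
  induction s using Sym2.ind with
  | _ a b =>
    rcases le_total a b with h | h
    · rw [Sym2.inf_mk, Sym2.sup_mk, inf_eq_left.mpr h, sup_eq_right.mpr h]
    · rw [Sym2.inf_mk, Sym2.sup_mk, inf_eq_right.mpr h, sup_eq_left.mpr h, Sym2.eq_swap]

lemma adj_inf_sup (e : G.edgeSet) : G.Adj (Sym2.inf (e : Sym2 V)) (Sym2.sup (e : Sym2 V)) := by
  rw [← SimpleGraph.mem_edgeSet, sym2_mk_inf_sup]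
  exact e.2

lemma inf_ne_sup (e : G.edgeSet) : Sym2.inf (e : Sym2 V) ≠ Sym2.sup (e : Sym2 V) :=
  (adj_inf_sup e).ne

lemma subdiv_adj_iff {x y : V ⊕ G.edgeSet × Fin t} :
    (Subdivision G t).Adj x y ↔ x ≠ y ∧ (SubdivRel G t x y ∨ SubdivRel G t y x) :=
  SimpleGraph.fromRel_adj _ _ _

lemma not_adj_inl_inl {u v : V} : ¬ (Subdivision G t).Adj (inl u) (inl v) := by
  rw [subdiv_adj_iff]
  rintro ⟨-, h | h⟩ <;> exact h

lemma adj_of_inl {u : V} {y : V ⊕ G.edgeSet × Fin t}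
    (h : (Subdivision G t).Adj (inl u) y) :
    ∃ (e : G.edgeSet) (i : Fin t), y = inr (e, i) ∧
      ((i.val = 0 ∧ u = Sym2.inf (e : Sym2 V)) ∨ (i.val = t - 1 ∧ u = Sym2.sup (e : Sym2 V))) := by
  rw [subdiv_adj_iff] at h
  obtain ⟨-, h | h⟩ := h
  · cases y with
    | inl v => exact h.elim
    | inr p => exact ⟨p.1, p.2, rfl, h⟩
  · cases y with
    | inl v => exact h.elim
    | inr p => exact h.elim

lemma adj_of_inr {e : G.edgeSet} {i : Fin t} {y : V ⊕ G.edgeSet × Fin t}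
    (h : (Subdivision G t).Adj (inr (e, i)) y) :
    (y = inl (Sym2.inf (e : Sym2 V)) ∧ i.val = 0) ∨
    (y = inl (Sym2.sup (e : Sym2 V)) ∧ i.val = t - 1) ∨
    (∃ j : Fin t, y = inr (e, j) ∧ (i.val + 1 = j.val ∨ j.val + 1 = i.val)) := by
  rw [subdiv_adj_iff] at h
  obtain ⟨-, h | h⟩ := h
  · cases y with
    | inl v => exact h.elim
    | inr p =>
      obtain ⟨rfl, h2⟩ := h
      exact Or.inr (Or.inr ⟨p.2, rfl, Or.inl h2⟩)
  · cases y with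
    | inl v =>
      rcases h with ⟨h1, h2⟩ | ⟨h1, h2⟩
      · exact Or.inl ⟨by rw [h2], h1⟩
      · exact Or.inr (Or.inl ⟨by rw [h2], h1⟩)
    | inr p =>
      obtain ⟨h1, h2⟩ := h
      subst h1
      exact Or.inr (Or.inr ⟨p.2, rfl, Or.inr h2⟩)

lemma adj_inl_inf {e : G.edgeSet} (h0 : 0 < t) :
    (Subdivision G t).Adj (inl (Sym2.inf (e : Sym2 V))) (inr (e, ⟨0, h0⟩)) := by
  rw [subdiv_adj_iff]
  exact ⟨by simp, Or.inl (Or.inl ⟨rfl, rfl⟩)⟩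

lemma adj_inr_inl_sup {e : G.edgeSet} (h0 : 0 < t) :
    (Subdivision G t).Adj (inr (e, ⟨t - 1, by omega⟩)) (inl (Sym2.sup (e : Sym2 V))) := by
  rw [subdiv_adj_iff]
  exact ⟨by simp, Or.inr (Or.inr ⟨rfl, rfl⟩)⟩

lemma adj_step {e : G.edgeSet} {i j : Fin t} (h : i.val + 1 = j.val) :
    (Subdivision G t).Adj (inr (e, i)) (inr (e, j)) := by
  rw [subdiv_adj_iff]
  refine ⟨?_, Or.inl ⟨rfl, h⟩⟩
  simp only [ne_eq, inr.injEq, Prod.mk.injEq, true_and]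
  intro hij
  rw [hij] at h
  omega


open SimpleGraph Walk in
def aux (e : G.edgeSet) : (k : ℕ) → (hk : k < t) →
    (Subdivision G t).Walk (inr (e, ⟨t - 1 - k, by omega⟩)) (inl (Sym2.sup (e : Sym2 V)))
  | 0, hk => Walk.cons (adj_inr_inl_sup hk) Walk.nil
  | k+1, hk => Walk.cons (adj_step (show t-1-(k+1)+1 = t-1-k by omega)) (aux e k (by omega))

lemma aux_length (e : G.edgeSet) : ∀ (k : ℕ) (hk : k < t), (aux e k hk).length = k + 1
  | 0, hk => rfl
  | k+1, hk => by
    rw [aux, SimpleGraph.Walk.length_cons, aux_length e k]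

lemma aux_support_mem (e : G.edgeSet) : ∀ (k : ℕ) (hk : k < t),
    ∀ x ∈ (aux e k hk).support,
      x = inl (Sym2.sup (e : Sym2 V)) ∨ ∃ i : Fin t, t - 1 - k ≤ i.val ∧ x = inr (e, i)
  | 0, hk => by
    rw [aux]
    intro x hx
    simp only [SimpleGraph.Walk.support_cons, SimpleGraph.Walk.support_nil, List.mem_cons,
      List.not_mem_nil, or_false, List.mem_singleton] at hx
    rcases hx with rfl | rfl
    · exact Or.inr ⟨⟨t-1, by omega⟩, le_refl _, rfl⟩
    · exact Or.inl rfl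
  | k+1, hk => by
    rw [aux]
    intro x hx
    simp only [SimpleGraph.Walk.support_cons, List.mem_cons] at hx
    rcases hx with rfl | hx
    · exact Or.inr ⟨⟨t-1-(k+1), by omega⟩, le_refl _, rfl⟩
    · rcases aux_support_mem e k (by omega) x hx with h | ⟨i, hi, rfl⟩
      · exact Or.inl h
      · refine Or.inr ⟨i, ?_, rfl⟩
        omega

lemma aux_support_nodup (e : G.edgeSet) : ∀ (k : ℕ) (hk : k < t), (aux e k hk).support.Nodup
  | 0, hk => by
    rw [aux]
    simp
  | k+1, hk => by
    rw [aux]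
    rw [SimpleGraph.Walk.support_cons, List.nodup_cons]
    refine ⟨fun hx => ?_, aux_support_nodup e k (by omega)⟩
    rcases aux_support_mem e k (by omega) _ hx with h | ⟨i, hi, h⟩
    · exact (by simp : (inr (e, ⟨t-1-(k+1), by omega⟩) : V ⊕ G.edgeSet × Fin t) ≠ inl _) h
    · rw [inr.injEq, Prod.mk.injEq, Fin.ext_iff] at h
      have h2 : t - 1 - (k+1) = i.val := h.2
      omega

lemma aux_edges_mem (e : G.edgeSet) : ∀ (k : ℕ) (hk : k < t),
    ∀ d ∈ (aux e k hk).edges, ∃ i : Fin t, inr (e, i) ∈ d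
  | 0, hk => by
    rw [aux]
    simp only [SimpleGraph.Walk.edges_cons, SimpleGraph.Walk.edges_nil, List.mem_singleton,
      List.mem_cons, List.not_mem_nil, or_false]
    rintro d rfl
    exact ⟨⟨t-1, by omega⟩, by simp⟩

  | k+1, hk => by
    rw [aux]
    simp only [SimpleGraph.Walk.edges_cons, List.mem_cons]
    rintro d (rfl | hd)
    · exact ⟨⟨t-1-(k+1), by omega⟩, by simp⟩
    · exact aux_edges_mem e k (by omega) d hd

def chain (e : G.edgeSet) (ht : 2 ≤ t) :
    (Subdivision G t).Walk (inl (Sym2.inf (e : Sym2 V))) (inl (Sym2.sup (e : Sym2 V))) :=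
  Walk.cons (adj_inl_inf (by omega))
    ((aux e (t-1) (by omega)).copy (by simp only [Nat.sub_self]) rfl)

lemma chain_length (e : G.edgeSet) (ht : 2 ≤ t) : (chain e ht).length = t + 1 := by
  rw [chain, SimpleGraph.Walk.length_cons, SimpleGraph.Walk.length_copy, aux_length]
  omega

lemma chain_support_mem (e : G.edgeSet) (ht : 2 ≤ t) :
    ∀ x ∈ (chain e ht).support,
      x = inl (Sym2.inf (e : Sym2 V)) ∨ x = inl (Sym2.sup (e : Sym2 V)) ∨
        ∃ i : Fin t, x = inr (e, i) := by
  rw [chain]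
  simp only [SimpleGraph.Walk.support_cons, SimpleGraph.Walk.support_copy, List.mem_cons]
  rintro x (rfl | hx)
  · exact Or.inl rfl
  · rcases aux_support_mem e (t-1) (by omega) x hx with h | ⟨i, _, h⟩
    · exact Or.inr (Or.inl h)
    · exact Or.inr (Or.inr ⟨i, h⟩)

lemma chain_support_nodup (e : G.edgeSet) (ht : 2 ≤ t) : (chain e ht).support.Nodup := by
  rw [chain, SimpleGraph.Walk.support_cons, List.nodup_cons]
  rw [SimpleGraph.Walk.support_copy]
  refine ⟨fun hx => ?_, aux_support_nodup e (t-1) (by omega)⟩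
  rcases aux_support_mem e (t-1) (by omega) _ hx with h | ⟨i, _, h⟩
  · exact inf_ne_sup e (inl.injEq _ _ ▸ h)
  · simp at h

lemma chain_edges_mem (e : G.edgeSet) (ht : 2 ≤ t) :
    ∀ d ∈ (chain e ht).edges, ∃ i : Fin t, inr (e, i) ∈ d := by
  rw [chain]
  simp only [SimpleGraph.Walk.edges_cons, SimpleGraph.Walk.edges_copy, List.mem_cons]
  rintro d (rfl | hd)
  · exact ⟨⟨0, by omega⟩, by simp⟩
  · exact aux_edges_mem e (t-1) (by omega) d hd

def edgeWalk (ht : 2 ≤ t) {u v : V} (h : G.Adj u v) :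
    (Subdivision G t).Walk (inl u) (inl v) :=
  if huv : u ≤ v then
    (chain (⟨s(u,v), h⟩ : G.edgeSet) ht).copy
      (by show inl (Sym2.inf s(u,v)) = inl u; rw [Sym2.inf_mk, inf_eq_left.mpr huv])
      (by show inl (Sym2.sup s(u,v)) = inl v; rw [Sym2.sup_mk, sup_eq_right.mpr huv])
  else
    ((chain (⟨s(u,v), h⟩ : G.edgeSet) ht).reverse).copy
      (by show inl (Sym2.sup s(u,v)) = inl u;
          rw [Sym2.sup_mk, sup_eq_left.mpr (le_of_not_ge huv)])
      (by show inl (Sym2.inf s(u,v)) = inl v;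
          rw [Sym2.inf_mk, inf_eq_right.mpr (le_of_not_ge huv)])

lemma edgeWalk_length (ht : 2 ≤ t) {u v : V} (h : G.Adj u v) :
    (edgeWalk ht h).length = t + 1 := by
  rw [edgeWalk]
  split_ifs <;>
    simp only [SimpleGraph.Walk.length_copy, SimpleGraph.Walk.length_reverse, chain_length]

lemma edgeWalk_support_mem (ht : 2 ≤ t) {u v : V} (h : G.Adj u v) :
    ∀ x ∈ (edgeWalk ht h).support,
      x = inl u ∨ x = inl v ∨ ∃ i : Fin t, x = inr (⟨s(u,v), h⟩, i) := by
  intro x hx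
  rw [edgeWalk] at hx
  split_ifs at hx with huv
  · simp only [SimpleGraph.Walk.support_copy] at hx
    rcases chain_support_mem _ ht x hx with h1 | h1 | ⟨i, h1⟩
    · left
      rw [h1]
      show inl (Sym2.inf s(u,v)) = inl u
      rw [Sym2.inf_mk, inf_eq_left.mpr huv]
    · right; left
      rw [h1]
      show inl (Sym2.sup s(u,v)) = inl v
      rw [Sym2.sup_mk, sup_eq_right.mpr huv]
    · exact Or.inr (Or.inr ⟨i, h1⟩)
  · simp only [SimpleGraph.Walk.support_copy, SimpleGraph.Walk.support_reverse,
      List.mem_reverse] at hx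
    rcases chain_support_mem _ ht x hx with h1 | h1 | ⟨i, h1⟩
    · right; left
      rw [h1]
      show inl (Sym2.inf s(u,v)) = inl v
      rw [Sym2.inf_mk, inf_eq_right.mpr (le_of_not_ge huv)]
    · left
      rw [h1]
      show inl (Sym2.sup s(u,v)) = inl u
      rw [Sym2.sup_mk, sup_eq_left.mpr (le_of_not_ge huv)]
    · exact Or.inr (Or.inr ⟨i, h1⟩)

lemma edgeWalk_support_nodup (ht : 2 ≤ t) {u v : V} (h : G.Adj u v) :
    (edgeWalk ht h).support.Nodup := by
  rw [edgeWalk]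
  split_ifs <;>
    simp only [SimpleGraph.Walk.support_copy, SimpleGraph.Walk.support_reverse,
      List.nodup_reverse] <;>
    exact chain_support_nodup _ ht

lemma edgeWalk_edges_mem (ht : 2 ≤ t) {u v : V} (h : G.Adj u v) :
    ∀ d ∈ (edgeWalk ht h).edges, ∃ i : Fin t, inr ((⟨s(u,v), h⟩ : G.edgeSet), i) ∈ d := by
  intro d hd
  rw [edgeWalk] at hd
  split_ifs at hd <;>
    simp only [SimpleGraph.Walk.edges_copy, SimpleGraph.Walk.edges_reverse,
      List.mem_reverse] at hd <;>
    exact chain_edges_mem _ ht d hd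

def lift (ht : 2 ≤ t) : {a b : V} → G.Walk a b → (Subdivision G t).Walk (inl a) (inl b)
  | _, _, SimpleGraph.Walk.nil => SimpleGraph.Walk.nil
  | _, _, SimpleGraph.Walk.cons h q => (edgeWalk ht h).append (lift ht q)

lemma lift_length (ht : 2 ≤ t) {a b : V} (w : G.Walk a b) :
    (lift ht w).length = (t + 1) * w.length := by
  induction w with
  | nil => rfl
  | cons h q ih =>
    rw [lift, SimpleGraph.Walk.length_append, edgeWalk_length, ih,
      SimpleGraph.Walk.length_cons, Nat.mul_succ]
    omega

lemma lift_support_mem (ht : 2 ≤ t) {a b : V} (w : G.Walk a b) :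
    ∀ x ∈ (lift ht w).support,
      (∃ c ∈ w.support, x = inl c) ∨
      (∃ (e : G.edgeSet) (i : Fin t), (e : Sym2 V) ∈ w.edges ∧ x = inr (e, i)) := by
  induction w with
  | nil =>
    intro x hx
    rw [lift] at hx
    simp only [SimpleGraph.Walk.support_nil, List.mem_singleton] at hx
    exact Or.inl ⟨_, by simp, hx⟩
  | cons h q ih =>
    intro x hx
    rw [lift, SimpleGraph.Walk.mem_support_append_iff] at hx
    rcases hx with hx | hx
    · rcases edgeWalk_support_mem ht h x hx with h1 | h1 | ⟨i, h1⟩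
      · exact Or.inl ⟨_, by simp, h1⟩
      · exact Or.inl ⟨_, by simp, h1⟩
      · exact Or.inr ⟨_, i, by simp, h1⟩
    · rcases ih x hx with ⟨c, hc, h1⟩ | ⟨e, i, he, h1⟩
      · exact Or.inl ⟨c, by simp [hc], h1⟩
      · exact Or.inr ⟨e, i, by simp [he], h1⟩

lemma edge_unique {d : Sym2 (V ⊕ G.edgeSet × Fin t)} (hd : d ∈ (Subdivision G t).edgeSet)
    {e f : G.edgeSet} {i j : Fin t} (he : inr (e, i) ∈ d) (hf : inr (f, j) ∈ d) : e = f := by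
  revert hd he hf
  induction d using Sym2.ind with
  | _ x y =>
    intro hd he hf
    rw [SimpleGraph.mem_edgeSet] at hd
    rw [Sym2.mem_iff] at he hf
    rcases he with he | he <;> rcases hf with hf | hf
    · rw [← he] at hf
      simp only [inr.injEq, Prod.mk.injEq] at hf
      exact hf.1.symm
    · rw [← he, ← hf] at hd
      rcases adj_of_inr hd with ⟨h1, -⟩ | ⟨h1, -⟩ | ⟨j', h1, -⟩
      · exact absurd h1 (by simp)
      · exact absurd h1 (by simp)
      · simp only [inr.injEq, Prod.mk.injEq] at h1
        exact h1.1.symm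
    · rw [← he, ← hf] at hd
      rcases adj_of_inr hd.symm with ⟨h1, -⟩ | ⟨h1, -⟩ | ⟨j', h1, -⟩
      · exact absurd h1 (by simp)
      · exact absurd h1 (by simp)
      · simp only [inr.injEq, Prod.mk.injEq] at h1
        exact h1.1.symm
    · rw [← he] at hf
      simp only [inr.injEq, Prod.mk.injEq] at hf
      exact hf.1.symm

lemma lift_edges_mem (ht : 2 ≤ t) {a b : V} (w : G.Walk a b) :
    ∀ d ∈ (lift ht w).edges,
      ∃ (e : G.edgeSet) (i : Fin t), inr (e, i) ∈ d ∧ (e : Sym2 V) ∈ w.edges := by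
  induction w with
  | nil => intro d hd; rw [lift] at hd; simp at hd
  | cons h q ih =>
    intro d hd
    rw [lift, SimpleGraph.Walk.edges_append, List.mem_append] at hd
    rcases hd with hd | hd
    · obtain ⟨i, hi⟩ := edgeWalk_edges_mem ht h d hd
      exact ⟨_, i, hi, by simp⟩
    · obtain ⟨e, i, hi, he⟩ := ih d hd
      exact ⟨e, i, hi, by simp [he]⟩

lemma head_not_mem_tail {W' : Type*} {H : SimpleGraph W'} {x y : W'} (w : H.Walk x y)
    (hn : w.support.Nodup) : x ∉ w.support.tail := by
  have := w.support_eq_cons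
  rw [this, List.nodup_cons] at hn
  exact hn.1

lemma lift_support_nodup (ht : 2 ≤ t) {a b : V} (w : G.Walk a b)
    (hw : w.support.Nodup) : (lift ht w).support.Nodup := by
  induction w with
  | nil => rw [lift]; simp
  | cons h q ih =>
    rw [SimpleGraph.Walk.support_cons, List.nodup_cons] at hw
    rw [lift, SimpleGraph.Walk.support_append]
    refine List.Nodup.append (edgeWalk_support_nodup ht h)
      (List.Nodup.sublist (List.tail_sublist _) (ih hw.2)) ?_
    intro x hx1 hx2
    have hx2' : x ∈ (lift ht q).support := List.mem_of_mem_tail hx2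
    rcases edgeWalk_support_mem ht h x hx1 with rfl | rfl | ⟨i, rfl⟩
    · rcases lift_support_mem ht q _ hx2' with ⟨c, hc, hc2⟩ | ⟨e, i, -, hc2⟩
      · exact hw.1 (inl.inj hc2 ▸ hc)
      · simp at hc2
    · exact head_not_mem_tail (lift ht q) (ih hw.2) hx2
    · rcases lift_support_mem ht q _ hx2' with ⟨c, -, hc2⟩ | ⟨e, i', he, hc2⟩
      · simp at hc2
      · rw [inr.injEq, Prod.mk.injEq] at hc2
        rw [← hc2.1] at he
        exact hw.1 (SimpleGraph.Walk.fst_mem_support_of_mem_edges q he)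

lemma lift_edges_nodup (ht : 2 ≤ t) {a b : V} (w : G.Walk a b)
    (hw : w.edges.Nodup) : (lift ht w).edges.Nodup := by
  induction w with
  | nil => rw [lift]; simp
  | cons h q ih =>
    rw [SimpleGraph.Walk.edges_cons, List.nodup_cons] at hw
    rw [lift, SimpleGraph.Walk.edges_append]
    refine List.Nodup.append
      ((SimpleGraph.Walk.IsPath.mk' (edgeWalk_support_nodup ht h)).isTrail.edges_nodup)
      (ih hw.2) ?_
    intro d hd1 hd2
    obtain ⟨i, hi⟩ := edgeWalk_edges_mem ht h d hd1
    obtain ⟨e', i', hi', he'⟩ := lift_edges_mem ht q d hd2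
    have hde : d ∈ (Subdivision G t).edgeSet := SimpleGraph.Walk.edges_subset_edgeSet _ hd2
    have : (⟨s(_, _), h⟩ : G.edgeSet) = e' := edge_unique hde hi hi'
    rw [← this] at he'
    exact hw.1 he'

lemma lift_isCycle (ht : 2 ≤ t) {v₀ : V} (c : G.Walk v₀ v₀) (hc : c.IsCycle) :
    (lift ht c).IsCycle := by
  cases c with
  | nil => exact absurd rfl hc.ne_nil
  | cons h q =>
    have hq : q.IsPath := SimpleGraph.Walk.IsPath.mk' (by
      have := hc.support_nodup
      rwa [SimpleGraph.Walk.support_cons, List.tail_cons] at this)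
    have hedges := hc.isCircuit.isTrail.edges_nodup
    rw [SimpleGraph.Walk.edges_cons, List.nodup_cons] at hedges
    refine ⟨⟨⟨?_⟩, ?_⟩, ?_⟩
    · -- edges nodup
      rw [lift, SimpleGraph.Walk.edges_append]
      refine List.Nodup.append
        ((SimpleGraph.Walk.IsPath.mk' (edgeWalk_support_nodup ht h)).isTrail.edges_nodup)
        (lift_edges_nodup ht q hedges.2) ?_
      intro d hd1 hd2
      obtain ⟨i, hi⟩ := edgeWalk_edges_mem ht h d hd1
      obtain ⟨e', i', hi', he'⟩ := lift_edges_mem ht q d hd2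
      have hde : d ∈ (Subdivision G t).edgeSet := SimpleGraph.Walk.edges_subset_edgeSet _ hd2
      have : (⟨s(_, _), h⟩ : G.edgeSet) = e' := edge_unique hde hi hi'
      rw [← this] at he'
      exact hedges.1 he'
    · -- ne nil
      intro hn
      have h1 := congrArg SimpleGraph.Walk.length hn
      rw [lift_length, SimpleGraph.Walk.length_nil, SimpleGraph.Walk.length_cons,
        Nat.mul_eq_zero] at h1
      omega
    · -- support tail nodup
      rw [lift, SimpleGraph.Walk.support_append,
        List.tail_append_of_ne_nil (SimpleGraph.Walk.support_ne_nil _)]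
      refine List.Nodup.append
        (List.Nodup.sublist (List.tail_sublist _) (edgeWalk_support_nodup ht h))
        (List.Nodup.sublist (List.tail_sublist _) (lift_support_nodup ht q hq.support_nodup)) ?_
      intro x hx1 hx2
      have hx1' : x ∈ (edgeWalk ht h).support := List.mem_of_mem_tail hx1
      have hx2' : x ∈ (lift ht q).support := List.mem_of_mem_tail hx2
      rcases edgeWalk_support_mem ht h x hx1' with rfl | rfl | ⟨i, rfl⟩
      · exact head_not_mem_tail (edgeWalk ht h) (edgeWalk_support_nodup ht h) hx1
      · exact head_not_mem_tail (lift ht q) (lift_support_nodup ht q hq.support_nodup) hx2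
      · rcases lift_support_mem ht q _ hx2' with ⟨c, -, hc2⟩ | ⟨e, i', he, hc2⟩
        · simp at hc2
        · rw [inr.injEq, Prod.mk.injEq] at hc2
          rw [← hc2.1] at he
          exact hedges.1 he

lemma loop_path_length {W' : Type*} {H : SimpleGraph W'} {x y : W'} (w : H.Walk x y)
    (hxy : x = y) (hp : w.IsPath) : w.length = 0 := by
  subst hxy
  cases w with
  | nil => rfl
  | cons h q =>
    exfalso
    have := hp.support_nodup
    rw [SimpleGraph.Walk.support_cons, List.nodup_cons] at this
    exact this.1 (SimpleGraph.Walk.end_mem_support q)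

lemma up (ht : 2 ≤ t) : ∀ (d : ℕ) (e : G.edgeSet) (j : ℕ) (hj : j < t) (v₀ : V)
    (w : (Subdivision G t).Walk (inr (e, ⟨j, hj⟩)) (inl v₀)),
    t - 1 - j = d → w.IsPath →
    (0 < j → inr (e, ⟨j-1, by omega⟩) ∉ w.support) →
    (j = 0 → inl (Sym2.inf (e : Sym2 V)) ∉ w.support.dropLast ∧ 1 < w.length) →
    ∃ (w' : (Subdivision G t).Walk (inl (Sym2.sup (e : Sym2 V))) (inl v₀))
      (pre : List (V ⊕ G.edgeSet × Fin t)),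
      w.support = pre ++ w'.support ∧ w.length = (t - j) + w'.length ∧
      (∀ x ∈ pre, ∃ i : Fin t, x = inr (e, i)) ∧
      (∀ i : Fin t, j ≤ i.val → inr (e, i) ∈ pre) := by
  intro d
  induction d with
  | zero =>
    intro e j hj v₀ w hd hw hb h0
    have hj1 : j = t - 1 := by omega
    cases w with
    | cons h w₂ =>
      rename_i y
      rcases adj_of_inr h with ⟨hy, hi0⟩ | ⟨hy, hit⟩ | ⟨j', hy, hj'⟩
      · exfalso
        have : j = 0 := hi0
        omega
      · subst hy
        refine ⟨w₂, [inr (e, ⟨j, hj⟩)], ?_, ?_, ?_, ?_⟩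
        · rw [SimpleGraph.Walk.support_cons]; rfl
        · rw [SimpleGraph.Walk.length_cons]; omega
        · rintro x hx
          rw [List.mem_singleton] at hx
          exact ⟨⟨j, hj⟩, hx⟩
        · intro i hi
          have : i = ⟨j, hj⟩ := Fin.ext (by have := i.isLt; omega)
          rw [this, List.mem_singleton]
      · rcases hj' with hj' | hj'
        · exfalso
          have h2 : j + 1 = j'.val := hj'
          have := j'.isLt
          omega
        · exfalso
          have h2 : j'.val + 1 = j := hj'
          have hjpos : 0 < j := by omega
          have hy' : j' = ⟨j - 1, by omega⟩ := Fin.ext (show j'.val = j - 1 by omega)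
          apply hb hjpos
          rw [SimpleGraph.Walk.support_cons, List.mem_cons]
          right
          rw [← hy', ← hy]
          exact SimpleGraph.Walk.start_mem_support w₂
  | succ d ih =>
    intro e j hj v₀ w hd hw hb h0
    cases w with
    | cons h w₂ =>
      rename_i y
      rcases adj_of_inr h with ⟨hy, hi0⟩ | ⟨hy, hit⟩ | ⟨j', hy, hj'⟩
      · exfalso
        have hj0 : j = 0 := hi0
        obtain ⟨hdrop, hlen⟩ := h0 hj0
        subst hy
        have hmem : inl (Sym2.inf (e : Sym2 V)) ∈ w₂.support :=
          SimpleGraph.Walk.start_mem_support w₂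
        have hdrop2 : inl (Sym2.inf (e : Sym2 V)) ∉ w₂.support.dropLast := by
          intro hcon
          apply hdrop
          rw [SimpleGraph.Walk.support_cons,
            List.dropLast_cons_of_ne_nil (SimpleGraph.Walk.support_ne_nil w₂), List.mem_cons]
          exact Or.inr hcon
        have heq : (inl (Sym2.inf (e : Sym2 V)) : V ⊕ G.edgeSet × Fin t) = inl v₀ := by
          have hsplit := w₂.support.dropLast_append_getLast (SimpleGraph.Walk.support_ne_nil w₂)
          rw [SimpleGraph.Walk.getLast_support] at hsplit
          rw [← hsplit, List.mem_append, List.mem_singleton] at hmem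
          rcases hmem with hm | hm
          · exact absurd hm hdrop2
          · exact hm
        have := loop_path_length w₂ heq (hw.of_cons)
        rw [SimpleGraph.Walk.length_cons] at hlen
        omega
      · exfalso
        have : j = t - 1 := hit
        omega
      · rcases hj' with hj' | hj'
        · have h2 : j + 1 = j'.val := hj'
          have hj1 : j + 1 < t := by have := j'.isLt; omega
          have hy' : j' = ⟨j + 1, hj1⟩ := Fin.ext (show j'.val = j + 1 by omega)
          subst hy
          subst hy'
          obtain ⟨w', pre', hsup, hlen, hpre1, hpre2⟩ :=
            ih e (j+1) hj1 v₀ w₂ (by omega) (hw.of_cons)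
              (fun _ => by
                have := hw.support_nodup
                rw [SimpleGraph.Walk.support_cons, List.nodup_cons] at this
                exact this.1)
              (fun hcon => absurd hcon (by omega))
          refine ⟨w', inr (e, ⟨j, hj⟩) :: pre', ?_, ?_, ?_, ?_⟩
          · rw [SimpleGraph.Walk.support_cons, hsup, List.cons_append]
          · rw [SimpleGraph.Walk.length_cons, hlen]; omega
          · rintro x hx
            rw [List.mem_cons] at hx
            rcases hx with rfl | hx
            · exact ⟨⟨j, hj⟩, rfl⟩
            · exact hpre1 x hx
          · intro i hi
            rw [List.mem_cons]
            rcases Nat.eq_or_lt_of_le hi with hij | hij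
            · left
              congr 1
              rw [Prod.mk.injEq]
              exact ⟨rfl, Fin.ext (show i.val = j by omega)⟩
            · right
              exact hpre2 i (show j + 1 ≤ i.val by omega)
        · exfalso
          have h2 : j'.val + 1 = j := hj'
          have hjpos : 0 < j := by omega
          have hy' : j' = ⟨j - 1, by omega⟩ := Fin.ext (show j'.val = j - 1 by omega)
          apply hb hjpos
          rw [SimpleGraph.Walk.support_cons, List.mem_cons]
          right
          rw [← hy', ← hy]
          exact SimpleGraph.Walk.start_mem_support w₂

lemma down (ht : 2 ≤ t) : ∀ (j : ℕ) (hj : j < t) (e : G.edgeSet) (v₀ : V)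
    (w : (Subdivision G t).Walk (inr (e, ⟨j, hj⟩)) (inl v₀)),
    w.IsPath →
    (∀ (hlt : j < t - 1), inr (e, ⟨j+1, by omega⟩) ∉ w.support) →
    (j = t - 1 → inl (Sym2.sup (e : Sym2 V)) ∉ w.support.dropLast ∧ 1 < w.length) →
    ∃ (w' : (Subdivision G t).Walk (inl (Sym2.inf (e : Sym2 V))) (inl v₀))
      (pre : List (V ⊕ G.edgeSet × Fin t)),
      w.support = pre ++ w'.support ∧ w.length = (j + 1) + w'.length ∧
      (∀ x ∈ pre, ∃ i : Fin t, x = inr (e, i)) ∧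
      (∀ i : Fin t, i.val ≤ j → inr (e, i) ∈ pre) := by
  intro j
  induction j with
  | zero =>
    intro hj e v₀ w hw hb h0
    cases w with
    | cons h w₂ =>
      rename_i y
      rcases adj_of_inr h with ⟨hy, hi0⟩ | ⟨hy, hit⟩ | ⟨j', hy, hj'⟩
      · subst hy
        refine ⟨w₂, [inr (e, ⟨0, hj⟩)], ?_, ?_, ?_, ?_⟩
        · rw [SimpleGraph.Walk.support_cons]; rfl
        · rw [SimpleGraph.Walk.length_cons]; omega
        · rintro x hx
          rw [List.mem_singleton] at hx
          exact ⟨⟨0, hj⟩, hx⟩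
        · intro i hi
          have : i = ⟨0, hj⟩ := Fin.ext (by omega)
          rw [this, List.mem_singleton]
      · exfalso
        have h2 : (0 : ℕ) = t - 1 := hit
        omega
      · rcases hj' with hj' | hj'
        · exfalso
          have h2 : (0 : ℕ) + 1 = j'.val := hj'
          have hy' : j' = ⟨0 + 1, by omega⟩ := Fin.ext (show j'.val = 0 + 1 by omega)
          apply hb (by omega)
          rw [SimpleGraph.Walk.support_cons, List.mem_cons]
          right
          rw [← hy', ← hy]
          exact SimpleGraph.Walk.start_mem_support w₂
        · exfalso
          have h2 : j'.val + 1 = (0 : ℕ) := hj'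
          omega
  | succ k ih =>
    intro hj e v₀ w hw hb h0
    cases w with
    | cons h w₂ =>
      rename_i y
      rcases adj_of_inr h with ⟨hy, hi0⟩ | ⟨hy, hit⟩ | ⟨j', hy, hj'⟩
      · exfalso
        have h2 : k + 1 = (0 : ℕ) := hi0
        omega
      · exfalso
        have hkt : k + 1 = t - 1 := hit
        obtain ⟨hdrop, hlen⟩ := h0 hkt
        subst hy
        have hmem : inl (Sym2.sup (e : Sym2 V)) ∈ w₂.support :=
          SimpleGraph.Walk.start_mem_support w₂
        have hdrop2 : inl (Sym2.sup (e : Sym2 V)) ∉ w₂.support.dropLast := by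
          intro hcon
          apply hdrop
          rw [SimpleGraph.Walk.support_cons,
            List.dropLast_cons_of_ne_nil (SimpleGraph.Walk.support_ne_nil w₂), List.mem_cons]
          exact Or.inr hcon
        have heq : (inl (Sym2.sup (e : Sym2 V)) : V ⊕ G.edgeSet × Fin t) = inl v₀ := by
          have hsplit := w₂.support.dropLast_append_getLast (SimpleGraph.Walk.support_ne_nil w₂)
          rw [SimpleGraph.Walk.getLast_support] at hsplit
          rw [← hsplit, List.mem_append, List.mem_singleton] at hmem
          rcases hmem with hm | hm
          · exact absurd hm hdrop2
          · exact hm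
        have := loop_path_length w₂ heq (hw.of_cons)
        rw [SimpleGraph.Walk.length_cons] at hlen
        omega
      · rcases hj' with hj' | hj'
        · exfalso
          have h2 : (k + 1) + 1 = j'.val := hj'
          have hlt2 := j'.isLt
          apply hb (by omega)
          rw [SimpleGraph.Walk.support_cons, List.mem_cons]
          right
          have hfin : (⟨k + 1 + 1, by omega⟩ : Fin t) = j' :=
            Fin.ext (show k + 1 + 1 = j'.val by omega)
          rw [hfin, ← hy]
          exact SimpleGraph.Walk.start_mem_support w₂
        · have h2 : j'.val + 1 = k + 1 := hj'
          have hk : k < t := by omega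
          have hy' : j' = ⟨k, hk⟩ := Fin.ext (show j'.val = k by omega)
          subst hy
          subst hy'
          obtain ⟨w', pre', hsup, hlen, hpre1, hpre2⟩ :=
            ih hk e v₀ w₂ (hw.of_cons)
              (fun _ => by
                have := hw.support_nodup
                rw [SimpleGraph.Walk.support_cons, List.nodup_cons] at this
                exact this.1)
              (fun hcon => absurd hcon (by omega))
          refine ⟨w', inr (e, ⟨k + 1, hj⟩) :: pre', ?_, ?_, ?_, ?_⟩
          · rw [SimpleGraph.Walk.support_cons, hsup, List.cons_append]
          · rw [SimpleGraph.Walk.length_cons, hlen]; omega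
          · rintro x hx
            rw [List.mem_cons] at hx
            rcases hx with rfl | hx
            · exact ⟨⟨k + 1, hj⟩, rfl⟩
            · exact hpre1 x hx
          · intro i hi
            rw [List.mem_cons]
            rcases Nat.eq_or_lt_of_le hi with hij | hij
            · left
              congr 1
              rw [Prod.mk.injEq]
              exact ⟨rfl, Fin.ext (show i.val = k + 1 by omega)⟩
            · right
              exact hpre2 i (show i.val ≤ k by omega)

lemma proj (ht : 2 ≤ t) : ∀ (n : ℕ) (u v₀ : V) (w : (Subdivision G t).Walk (inl u) (inl v₀)),
    w.length = n → w.IsPath →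
    ∃ q : G.Walk u v₀, q.IsPath ∧ (t + 1) * q.length = w.length ∧
      (∀ a ∈ q.support, (inl a : V ⊕ G.edgeSet × Fin t) ∈ w.support) ∧
      (∀ a : V, (inl a : V ⊕ G.edgeSet × Fin t) ∈ w.support → a ∈ q.support) ∧
      (∀ d ∈ q.edges, ∃ (he : d ∈ G.edgeSet) (i : Fin t),
        (inr (⟨d, he⟩, i) : V ⊕ G.edgeSet × Fin t) ∈ w.support) := by
  intro n
  induction n using Nat.strong_induction_on with
  | _ n ihn =>
    intro u v₀ w hn hw
    cases w with
    | nil =>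
      refine ⟨SimpleGraph.Walk.nil, SimpleGraph.Walk.IsPath.nil, by simp, ?_, ?_, ?_⟩
      · intro a ha
        simp only [SimpleGraph.Walk.support_nil, List.mem_singleton] at ha
        simp [ha]
      · intro a ha
        simp only [SimpleGraph.Walk.support_nil, List.mem_singleton, inl.injEq] at ha
        simp [ha]
      · intro d hd
        simp at hd
    | cons h w₂ =>
      rename_i y
      have hne : u ≠ v₀ := by
        intro huv
        have := loop_path_length (SimpleGraph.Walk.cons h w₂)
          (by rw [huv]) hw
        simp at this
      have hx1 : (inl u : V ⊕ G.edgeSet × Fin t) ∉ w₂.support := by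
        have := hw.support_nodup
        rw [SimpleGraph.Walk.support_cons, List.nodup_cons] at this
        exact this.1
      obtain ⟨f, i, rfl, hcase⟩ := adj_of_inl h
      rcases hcase with ⟨hi0, hu⟩ | ⟨hit, hu⟩
      · -- entered at the bottom of edge f ; u = inf f
        have h0t : 0 < t := lt_of_lt_of_le two_pos ht
        obtain rfl : i = ⟨0, h0t⟩ := Fin.ext hi0
        have hdrop : (inl (Sym2.inf (f : Sym2 V)) : V ⊕ G.edgeSet × Fin t)
            ∉ w₂.support.dropLast := by
          rw [← hu]
          intro hc
          exact hx1 ((List.dropLast_sublist _).subset hc)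
        have hlen2 : 1 < w₂.length := by
          cases w₂ with
          | cons h3 w₃ =>
            cases w₃ with
            | nil =>
              exfalso
              rcases adj_of_inr h3 with ⟨hy3, h03⟩ | ⟨hy3, ht3⟩ | ⟨j3, hy3, -⟩
              · exact hne (by rw [hu]; exact (inl.inj hy3).symm)
              · have : (0 : ℕ) = t - 1 := ht3
                omega
              · simp at hy3
            | cons h4 w₄ =>
              simp only [SimpleGraph.Walk.length_cons]
              omega
        obtain ⟨w', pre, hsup, hlen, hpre1, hpre2⟩ :=
          up ht (t - 1 - 0) f 0 (by omega) v₀ w₂ rfl hw.of_cons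
            (fun hc => absurd hc (by omega)) (fun _ => ⟨hdrop, hlen2⟩)
        have hadj : G.Adj u (Sym2.sup (f : Sym2 V)) := by
          rw [hu]; exact adj_inf_sup f
        have hw'path : w'.IsPath := by
          apply SimpleGraph.Walk.IsPath.mk'
          have := hw.of_cons.support_nodup
          rw [hsup] at this
          exact this.of_append_right
        have hn2 : w'.length < n := by
          have : (SimpleGraph.Walk.cons h w₂).length = w₂.length + 1 :=
            SimpleGraph.Walk.length_cons _ _
          omega
        obtain ⟨q₁, hq₁path, hq₁len, hq₁supa, hq₁supb, hq₁edges⟩ :=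
          ihn w'.length hn2 _ v₀ w' rfl hw'path
        have hmemw : ∀ x, x ∈ w₂.support →
            x ∈ (SimpleGraph.Walk.cons h w₂).support := by
          intro x hx
          rw [SimpleGraph.Walk.support_cons, List.mem_cons]
          exact Or.inr hx
        have hmemw' : ∀ x, x ∈ w'.support → x ∈ w₂.support := by
          intro x hx
          rw [hsup, List.mem_append]
          exact Or.inr hx
        refine ⟨SimpleGraph.Walk.cons hadj q₁, ?_, ?_, ?_, ?_, ?_⟩
        · refine hq₁path.cons ?_
          intro hc
          exact hx1 (hmemw' _ (hq₁supa u hc))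
        · rw [SimpleGraph.Walk.length_cons, SimpleGraph.Walk.length_cons, Nat.mul_succ, hq₁len]
          omega
        · intro a ha
          rw [SimpleGraph.Walk.support_cons, List.mem_cons] at ha
          rcases ha with rfl | ha
          · exact SimpleGraph.Walk.start_mem_support _
          · exact hmemw _ (hmemw' _ (hq₁supa a ha))
        · intro a ha
          rw [SimpleGraph.Walk.support_cons, List.mem_cons] at ha
          rw [SimpleGraph.Walk.support_cons, List.mem_cons]
          rcases ha with ha | ha
          · exact Or.inl (inl.inj ha)
          · rw [hsup, List.mem_append] at ha
            rcases ha with ha | ha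
            · obtain ⟨i', hi'⟩ := hpre1 _ ha
              simp at hi'
            · exact Or.inr (hq₁supb a ha)
        · intro d hd
          rw [SimpleGraph.Walk.edges_cons, List.mem_cons] at hd
          rcases hd with rfl | hd
          · have hdf : s(u, Sym2.sup (f : Sym2 V)) = (f : Sym2 V) := by
              rw [hu, sym2_mk_inf_sup]
            have he : s(u, Sym2.sup (f : Sym2 V)) ∈ G.edgeSet := by
              rw [hdf]; exact f.2
            refine ⟨he, ⟨0, by omega⟩, ?_⟩
            have hef : (⟨s(u, Sym2.sup (f : Sym2 V)), he⟩ : G.edgeSet) = f :=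
              Subtype.ext hdf
            rw [hef]
            apply hmemw
            rw [hsup, List.mem_append]
            exact Or.inl (hpre2 ⟨0, by omega⟩ (by omega))
          · obtain ⟨he, i', hi'⟩ := hq₁edges d hd
            exact ⟨he, i', hmemw _ (hmemw' _ hi')⟩
      · -- entered at the top of edge f ; u = sup f
        have h0t : 0 < t := lt_of_lt_of_le two_pos ht
        obtain rfl : i = ⟨t - 1, Nat.sub_lt h0t Nat.one_pos⟩ := Fin.ext hit
        have hdrop : (inl (Sym2.sup (f : Sym2 V)) : V ⊕ G.edgeSet × Fin t)
            ∉ w₂.support.dropLast := by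
          rw [← hu]
          intro hc
          exact hx1 ((List.dropLast_sublist _).subset hc)
        have hlen2 : 1 < w₂.length := by
          cases w₂ with
          | cons h3 w₃ =>
            cases w₃ with
            | nil =>
              exfalso
              rcases adj_of_inr h3 with ⟨hy3, h03⟩ | ⟨hy3, ht3⟩ | ⟨j3, hy3, -⟩
              · have : (t - 1 : ℕ) = 0 := h03
                omega
              · exact hne (by rw [hu]; exact (inl.inj hy3).symm)
              · simp at hy3
            | cons h4 w₄ =>
              simp only [SimpleGraph.Walk.length_cons]
              omega
        obtain ⟨w', pre, hsup, hlen, hpre1, hpre2⟩ :=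
          down ht (t - 1) (by omega) f v₀ w₂ hw.of_cons
            (fun hc => absurd hc (by omega)) (fun _ => ⟨hdrop, hlen2⟩)
        have hadj : G.Adj u (Sym2.inf (f : Sym2 V)) := by
          rw [hu]; exact (adj_inf_sup f).symm
        have hw'path : w'.IsPath := by
          apply SimpleGraph.Walk.IsPath.mk'
          have := hw.of_cons.support_nodup
          rw [hsup] at this
          exact this.of_append_right
        have hn2 : w'.length < n := by
          have : (SimpleGraph.Walk.cons h w₂).length = w₂.length + 1 :=
            SimpleGraph.Walk.length_cons _ _
          omega
        obtain ⟨q₁, hq₁path, hq₁len, hq₁supa, hq₁supb, hq₁edges⟩ :=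
          ihn w'.length hn2 _ v₀ w' rfl hw'path
        have hmemw : ∀ x, x ∈ w₂.support →
            x ∈ (SimpleGraph.Walk.cons h w₂).support := by
          intro x hx
          rw [SimpleGraph.Walk.support_cons, List.mem_cons]
          exact Or.inr hx
        have hmemw' : ∀ x, x ∈ w'.support → x ∈ w₂.support := by
          intro x hx
          rw [hsup, List.mem_append]
          exact Or.inr hx
        refine ⟨SimpleGraph.Walk.cons hadj q₁, ?_, ?_, ?_, ?_, ?_⟩
        · refine hq₁path.cons ?_
          intro hc
          exact hx1 (hmemw' _ (hq₁supa u hc))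
        · rw [SimpleGraph.Walk.length_cons, SimpleGraph.Walk.length_cons, Nat.mul_succ, hq₁len]
          omega
        · intro a ha
          rw [SimpleGraph.Walk.support_cons, List.mem_cons] at ha
          rcases ha with rfl | ha
          · exact SimpleGraph.Walk.start_mem_support _
          · exact hmemw _ (hmemw' _ (hq₁supa a ha))
        · intro a ha
          rw [SimpleGraph.Walk.support_cons, List.mem_cons] at ha
          rw [SimpleGraph.Walk.support_cons, List.mem_cons]
          rcases ha with ha | ha
          · exact Or.inl (inl.inj ha)
          · rw [hsup, List.mem_append] at ha
            rcases ha with ha | ha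
            · obtain ⟨i', hi'⟩ := hpre1 _ ha
              simp at hi'
            · exact Or.inr (hq₁supb a ha)
        · intro d hd
          rw [SimpleGraph.Walk.edges_cons, List.mem_cons] at hd
          rcases hd with rfl | hd
          · have hdf : s(u, Sym2.inf (f : Sym2 V)) = (f : Sym2 V) := by
              rw [hu, Sym2.eq_swap, sym2_mk_inf_sup]
            have he : s(u, Sym2.inf (f : Sym2 V)) ∈ G.edgeSet := by
              rw [hdf]; exact f.2
            refine ⟨he, ⟨0, by omega⟩, ?_⟩
            have hef : (⟨s(u, Sym2.inf (f : Sym2 V)), he⟩ : G.edgeSet) = f :=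
              Subtype.ext hdf
            rw [hef]
            apply hmemw
            rw [hsup, List.mem_append]
            exact Or.inl (hpre2 ⟨0, by omega⟩ (by omega))
          · obtain ⟨he, i', hi'⟩ := hq₁edges d hd
            exact ⟨he, i', hmemw _ (hmemw' _ hi')⟩

lemma no_inr_cycle (ht : 2 ≤ t) (e : G.edgeSet) (j : Fin t)
    (c : (Subdivision G t).Walk (inr (e, j)) (inr (e, j))) (hc : c.IsCycle)
    (hinr : ∀ x ∈ c.support, ∀ a : V, x ≠ inl a)
    (hmax : ∀ x ∈ c.support, Sum.elim (fun _ => 0) (fun p => p.2.val) x ≤ j.val) :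
    False := by
  cases c with
  | nil => exact hc.ne_nil rfl
  | cons h p =>
    rename_i y
    have hppath : p.IsPath := by
      apply SimpleGraph.Walk.IsPath.mk'
      have := hc.support_nodup
      rwa [SimpleGraph.Walk.support_cons, List.tail_cons] at this
    have hymem : y ∈ (SimpleGraph.Walk.cons h p).support := by
      rw [SimpleGraph.Walk.support_cons, List.mem_cons]
      exact Or.inr (SimpleGraph.Walk.start_mem_support p)
    rcases adj_of_inr h with ⟨hy, -⟩ | ⟨hy, -⟩ | ⟨j', hy, hj'⟩
    · exact hinr _ hymem _ hy
    · exact hinr _ hymem _ hy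
    · rcases hj' with hj' | hj'
      · have hle := hmax y hymem
        rw [hy] at hle
        simp only [Sum.elim_inr] at hle
        have h2 : j.val + 1 = j'.val := hj'
        omega
      · have h2 : j'.val + 1 = j.val := hj'
        have h3 := hc.three_le_length
        rw [SimpleGraph.Walk.length_cons] at h3
        have hp2 : 2 ≤ p.length := by omega
        obtain ⟨r, hr1, hr2, hr3⟩ :
            ∃ r : (Subdivision G t).Walk (inr (e, j)) y,
              r.IsPath ∧ r.length = p.length ∧ ∀ x ∈ r.support, x ∈ p.support :=
          ⟨p.reverse, hppath.reverse, SimpleGraph.Walk.length_reverse p, by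
            intro x hx
            rwa [SimpleGraph.Walk.support_reverse, List.mem_reverse] at hx⟩
        cases r with
        | nil =>
          rw [SimpleGraph.Walk.length_nil] at hr2
          omega
        | cons hadj2 r2 =>
          rename_i z
          have hzp : z ∈ p.support := by
            apply hr3
            rw [SimpleGraph.Walk.support_cons, List.mem_cons]
            exact Or.inr (SimpleGraph.Walk.start_mem_support r2)
          have hzmem : z ∈ (SimpleGraph.Walk.cons h p).support := by
            rw [SimpleGraph.Walk.support_cons, List.mem_cons]
            exact Or.inr hzp
          rcases adj_of_inr hadj2 with ⟨hz, -⟩ | ⟨hz, -⟩ | ⟨j₂, hz, hj₂⟩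
          · exact hinr _ hzmem _ hz
          · exact hinr _ hzmem _ hz
          · rcases hj₂ with hj₂ | hj₂
            · have hle := hmax z hzmem
              rw [hz] at hle
              simp only [Sum.elim_inr] at hle
              have h4 : j.val + 1 = j₂.val := hj₂
              omega
            · have h4 : j₂.val + 1 = j.val := hj₂
              have hzy : z = y := by
                rw [hz, hy]
                congr 2
                exact Fin.ext (by omega)
              have := loop_path_length r2 hzy hr1.of_cons
              rw [SimpleGraph.Walk.length_cons] at hr2
              omega

lemma exists_inl_cycle (ht : 2 ≤ t) {x₀ : V ⊕ G.edgeSet × Fin t}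
    (c : (Subdivision G t).Walk x₀ x₀) (hc : c.IsCycle) :
    ∃ a : V, (inl a : V ⊕ G.edgeSet × Fin t) ∈ c.support := by
  by_contra hcon
  push_neg at hcon
  obtain ⟨b, hb, hmax⟩ := Finset.exists_max_image c.support.toFinset
    (Sum.elim (fun _ => 0) (fun p => p.2.val))
    ⟨x₀, List.mem_toFinset.mpr (SimpleGraph.Walk.start_mem_support c)⟩
  rw [List.mem_toFinset] at hb
  cases b with
  | inl a => exact hcon a hb
  | inr pq =>
    obtain ⟨e, j⟩ := pq
    have hsub : ∀ x ∈ (c.rotate _ hb).support, x ∈ c.support := by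
      intro x hx
      rw [SimpleGraph.Walk.support_eq_cons, List.mem_cons] at hx
      rcases hx with rfl | hx
      · exact hb
      · exact List.mem_of_mem_tail
          (((SimpleGraph.Walk.support_rotate c _ hb).perm.mem_iff).mp hx)
    refine no_inr_cycle ht e j (c.rotate _ hb) (hc.rotate hb) ?_ ?_
    · intro x hx a heq
      exact hcon a (heq ▸ hsub x hx)
    · intro x hx
      have := hmax x (List.mem_toFinset.mpr (hsub x hx))
      simpa using this

lemma cycle_proj (ht : 2 ≤ t) {x₀ : V ⊕ G.edgeSet × Fin t}
    (c : (Subdivision G t).Walk x₀ x₀) (hc : c.IsCycle) :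
    ∃ (v₀ : V) (q : G.Walk v₀ v₀), q.IsCycle ∧ (t + 1) * q.length = c.length ∧
      (∀ a ∈ q.support, (inl a : V ⊕ G.edgeSet × Fin t) ∈ c.support) := by
  obtain ⟨v₀, hv⟩ := exists_inl_cycle ht c hc
  obtain ⟨c₂, hc₂, hlen₂, hsub₂⟩ :
      ∃ c₂ : (Subdivision G t).Walk (inl v₀) (inl v₀),
        c₂.IsCycle ∧ c₂.length = c.length ∧ ∀ x ∈ c₂.support, x ∈ c.support := by
    refine ⟨c.rotate _ hv, hc.rotate hv, ?_, ?_⟩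
    · rw [← SimpleGraph.Walk.length_darts, ← SimpleGraph.Walk.length_darts c]
      exact (SimpleGraph.Walk.rotate_darts c _ hv).perm.length_eq
    · intro x hx
      rw [SimpleGraph.Walk.support_eq_cons, List.mem_cons] at hx
      rcases hx with rfl | hx
      · exact hv
      · exact List.mem_of_mem_tail
          (((SimpleGraph.Walk.support_rotate c _ hv).perm.mem_iff).mp hx)
  clear hv hc
  refine ⟨v₀, ?_⟩
  cases c₂ with
  | nil => exact absurd rfl hc₂.ne_nil
  | cons h p =>
    rename_i y
    have hppath : p.IsPath := by
      apply SimpleGraph.Walk.IsPath.mk'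
      have := hc₂.support_nodup
      rwa [SimpleGraph.Walk.support_cons, List.tail_cons] at this
    have hedges := hc₂.isCircuit.isTrail.edges_nodup
    rw [SimpleGraph.Walk.edges_cons, List.nodup_cons] at hedges
    have h3 := hc₂.three_le_length
    rw [SimpleGraph.Walk.length_cons] at h3
    have hlen2 : 1 < p.length := by omega
    have hdropgen : (inl v₀ : V ⊕ G.edgeSet × Fin t) ∉ p.support.dropLast := by
      have hsplit := p.support.dropLast_append_getLast (SimpleGraph.Walk.support_ne_nil p)
      rw [SimpleGraph.Walk.getLast_support] at hsplit
      have hnd := hppath.support_nodup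
      rw [← hsplit] at hnd
      intro hcd
      exact (List.disjoint_of_nodup_append hnd) hcd (List.mem_singleton_self _)
    obtain ⟨f, i, rfl, hcase⟩ := adj_of_inl h
    have h0t : 0 < t := lt_of_lt_of_le two_pos ht
    rcases hcase with ⟨hi0, hu⟩ | ⟨hit, hu⟩
    · -- v₀ = inf f
      obtain rfl : i = ⟨0, h0t⟩ := Fin.ext hi0
      obtain ⟨w', pre, hsup, hlen, hpre1, hpre2⟩ :=
        up ht (t - 1 - 0) f 0 (by omega) v₀ p rfl hppath
          (fun hcd => absurd hcd (by omega))
          (fun _ => ⟨by rw [← hu]; exact hdropgen, hlen2⟩)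
      have hw'path : w'.IsPath := by
        apply SimpleGraph.Walk.IsPath.mk'
        have := hppath.support_nodup
        rw [hsup] at this
        exact this.of_append_right
      have hadjG : G.Adj v₀ (Sym2.sup (f : Sym2 V)) := by
        rw [hu]; exact adj_inf_sup f
      obtain ⟨q₁, hq₁path, hq₁len, hq₁supa, hq₁supb, hq₁edges⟩ :=
        proj ht w'.length _ v₀ w' rfl hw'path
      have hdf : s(v₀, Sym2.sup (f : Sym2 V)) = (f : Sym2 V) := by
        rw [hu, sym2_mk_inf_sup]
      refine ⟨SimpleGraph.Walk.cons hadjG q₁, ⟨⟨⟨?_⟩, ?_⟩, ?_⟩, ?_, ?_⟩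
      · -- edges nodup
        rw [SimpleGraph.Walk.edges_cons, List.nodup_cons]
        refine ⟨?_, hq₁path.isTrail.edges_nodup⟩
        intro hcd
        obtain ⟨he, i', hmem⟩ := hq₁edges _ hcd
        have hef : (⟨s(v₀, Sym2.sup (f : Sym2 V)), he⟩ : G.edgeSet) = f := Subtype.ext hdf
        rw [hef] at hmem
        have hnd := hppath.support_nodup
        rw [hsup] at hnd
        exact (List.disjoint_of_nodup_append hnd) (hpre2 i' (Nat.zero_le _)) hmem
      · -- ne nil
        intro hn
        have := congrArg SimpleGraph.Walk.length hn
        simp at this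
      · -- support tail nodup
        rw [SimpleGraph.Walk.support_cons, List.tail_cons]
        exact hq₁path.support_nodup
      · -- length
        have hpc : p.length + 1 = c.length := hlen₂
        rw [SimpleGraph.Walk.length_cons, Nat.mul_succ, hq₁len]
        omega
      · -- support
        intro a ha
        rw [SimpleGraph.Walk.support_cons, List.mem_cons] at ha
        rcases ha with rfl | ha
        · exact hsub₂ _ (SimpleGraph.Walk.start_mem_support _)
        · apply hsub₂
          rw [SimpleGraph.Walk.support_cons, List.mem_cons]
          right
          rw [hsup, List.mem_append]
          exact Or.inr (hq₁supa a ha)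
    · -- v₀ = sup f
      obtain rfl : i = ⟨t - 1, Nat.sub_lt h0t Nat.one_pos⟩ := Fin.ext hit
      obtain ⟨w', pre, hsup, hlen, hpre1, hpre2⟩ :=
        down ht (t - 1) (by omega) f v₀ p hppath
          (fun hcd => absurd hcd (by omega))
          (fun _ => ⟨by rw [← hu]; exact hdropgen, hlen2⟩)
      have hw'path : w'.IsPath := by
        apply SimpleGraph.Walk.IsPath.mk'
        have := hppath.support_nodup
        rw [hsup] at this
        exact this.of_append_right
      have hadjG : G.Adj v₀ (Sym2.inf (f : Sym2 V)) := by
        rw [hu]; exact (adj_inf_sup f).symm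
      obtain ⟨q₁, hq₁path, hq₁len, hq₁supa, hq₁supb, hq₁edges⟩ :=
        proj ht w'.length _ v₀ w' rfl hw'path
      have hdf : s(v₀, Sym2.inf (f : Sym2 V)) = (f : Sym2 V) := by
        rw [hu, Sym2.eq_swap, sym2_mk_inf_sup]
      refine ⟨SimpleGraph.Walk.cons hadjG q₁, ⟨⟨⟨?_⟩, ?_⟩, ?_⟩, ?_, ?_⟩
      · rw [SimpleGraph.Walk.edges_cons, List.nodup_cons]
        refine ⟨?_, hq₁path.isTrail.edges_nodup⟩
        intro hcd
        obtain ⟨he, i', hmem⟩ := hq₁edges _ hcd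
        have hef : (⟨s(v₀, Sym2.inf (f : Sym2 V)), he⟩ : G.edgeSet) = f := Subtype.ext hdf
        rw [hef] at hmem
        have hnd := hppath.support_nodup
        rw [hsup] at hnd
        exact (List.disjoint_of_nodup_append hnd)
          (hpre2 i' (by omega)) hmem
      · intro hn
        have := congrArg SimpleGraph.Walk.length hn
        simp at this
      · rw [SimpleGraph.Walk.support_cons, List.tail_cons]
        exact hq₁path.support_nodup
      · have hpc : p.length + 1 = c.length := hlen₂
        rw [SimpleGraph.Walk.length_cons, Nat.mul_succ, hq₁len]
        omega
      · intro a ha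
        rw [SimpleGraph.Walk.support_cons, List.mem_cons] at ha
        rcases ha with rfl | ha
        · exact hsub₂ _ (SimpleGraph.Walk.start_mem_support _)
        · apply hsub₂
          rw [SimpleGraph.Walk.support_cons, List.mem_cons]
          right
          rw [hsup, List.mem_append]
          exact Or.inr (hq₁supa a ha)

end Subdiv

open Subdiv Sum in
/-- Subdividing every edge of `G` exactly `2p` times preserves the minimum size
of an even cycle transversal, and yields a graph of girth greater than `p`
(provided `G` has a cycle). -/
theorem subdivision_ect_and_girth {V : Type*} [Fintype V] [LinearOrder V]
    (G : SimpleGraph V) (p : ℕ) (hp : 1 ≤ p)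
    (hcyc : ∃ (v : V) (w : G.Walk v v), w.IsCycle) :
    sInf {k : ℕ | ∃ S : Set V, IsEvenCycleTransversal G S ∧ S.ncard = k} =
      sInf {k : ℕ | ∃ S : Set (V ⊕ G.edgeSet × Fin (2 * p)),
        IsEvenCycleTransversal (Subdivision G (2 * p)) S ∧ S.ncard = k} ∧
    (p : ℕ∞) < (Subdivision G (2 * p)).egirth := by
  have ht : 2 ≤ 2 * p := by omega
  constructor
  · -- equality of minimum transversal sizes
    have hBne : {k : ℕ | ∃ S : Set (V ⊕ G.edgeSet × Fin (2 * p)),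
        IsEvenCycleTransversal (Subdivision G (2 * p)) S ∧ S.ncard = k}.Nonempty := by
      refine ⟨(Set.univ : Set (V ⊕ G.edgeSet × Fin (2 * p))).ncard, Set.univ, ?_, rfl⟩
      intro v w hw hev
      exact ⟨v, Set.mem_univ v, w.start_mem_support⟩
    have hAne : {k : ℕ | ∃ S : Set V, IsEvenCycleTransversal G S ∧ S.ncard = k}.Nonempty := by
      refine ⟨(Set.univ : Set V).ncard, Set.univ, ?_, rfl⟩
      intro v w hw hev
      exact ⟨v, Set.mem_univ v, w.start_mem_support⟩
    apply le_antisymm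
    · -- ≤ : from a transversal of the subdivision get one of G
      obtain ⟨S', hS', hcardB⟩ := Nat.sInf_mem hBne
      set φ : (V ⊕ G.edgeSet × Fin (2 * p)) → V :=
        Sum.elim id (fun pe => Sym2.inf (pe.1 : Sym2 V)) with hφ
      have hectA : IsEvenCycleTransversal G (φ '' S') := by
        intro v cw hcw hev
        have hC := lift_isCycle ht cw hcw
        have hCev : Even (lift ht cw).length := by
          rw [lift_length]
          exact hev.mul_left _
        obtain ⟨x, hxS, hxsup⟩ := hS' _ (lift ht cw) hC hCev
        refine ⟨φ x, Set.mem_image_of_mem _ hxS, ?_⟩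
        rcases lift_support_mem ht cw x hxsup with ⟨a, ha, rfl⟩ | ⟨e, i, he, rfl⟩
        · simpa [hφ] using ha
        · simp only [hφ, Sum.elim_inr]
          have h2 : (e : Sym2 V) = s(Sym2.inf (e : Sym2 V), Sym2.sup (e : Sym2 V)) :=
            (sym2_mk_inf_sup _).symm
          rw [h2] at he
          exact SimpleGraph.Walk.fst_mem_support_of_mem_edges cw he
      calc sInf {k : ℕ | ∃ S : Set V, IsEvenCycleTransversal G S ∧ S.ncard = k}
          ≤ (φ '' S').ncard := Nat.sInf_le ⟨φ '' S', hectA, rfl⟩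
        _ ≤ S'.ncard := Set.ncard_image_le (Set.toFinite S')
        _ = _ := hcardB
    · -- ≥ : from a transversal of G get one of the subdivision
      obtain ⟨S, hS, hcardA⟩ := Nat.sInf_mem hAne
      have hectB : IsEvenCycleTransversal (Subdivision G (2 * p)) (Sum.inl '' S) := by
        intro x₀ cw hcw hev
        obtain ⟨v₀, q, hq, hlen, hsupa⟩ := cycle_proj ht cw hcw
        have hqev : Even q.length := by
          rw [← hlen] at hev
          rcases Nat.even_mul.mp hev with h | h
          · exfalso
            obtain ⟨m, hm⟩ := h
            omega
          · exact h
        obtain ⟨x, hxS, hxsup⟩ := hS v₀ q hq hqev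
        exact ⟨inl x, Set.mem_image_of_mem _ hxS, hsupa x hxsup⟩
      calc sInf {k : ℕ | ∃ S : Set (V ⊕ G.edgeSet × Fin (2 * p)),
            IsEvenCycleTransversal (Subdivision G (2 * p)) S ∧ S.ncard = k}
          ≤ (Sum.inl '' S).ncard := Nat.sInf_le ⟨Sum.inl '' S, hectB, rfl⟩
        _ = S.ncard := Set.ncard_image_of_injective S Sum.inl_injective
        _ = _ := hcardA
  · -- girth bound
    have h1 : ((p + 1 : ℕ) : ℕ∞) ≤ (Subdivision G (2 * p)).egirth := by
      rw [SimpleGraph.le_egirth]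
      intro a w hw
      obtain ⟨v₀, q, hq, hlen, -⟩ := cycle_proj ht w hw
      have h3 := hq.three_le_length
      have h5 : 2 * p + 1 ≤ (2 * p + 1) * q.length :=
        Nat.le_mul_of_pos_right _ (by omega)
      have h6 : p + 1 ≤ w.length := le_trans (by omega) (le_trans h5 (le_of_eq hlen))
      exact_mod_cast Nat.cast_le.mpr h6
    refine lt_of_lt_of_le ?_ h1
    exact_mod_cast Nat.cast_lt.mpr (Nat.lt_succ_self p)
end

section
/- Let F be a graph each of whose blocks has at most d vertices, and suppose F is sP₃-free. Then the number of cutvertices v of F that have at least two leaf blocks as children in the (rooted) block-cut forest (terminals of type 1) is at most d(s−1). -/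
/-- A cutvertex of `G`: a vertex lying in two distinct blocks. -/
def IsCutvertex {V : Type*} (G : SimpleGraph V) (v : V) : Prop :=
  ∃ B₁ B₂ : Set V, IsBlock G B₁ ∧ IsBlock G B₂ ∧ B₁ ≠ B₂ ∧ v ∈ B₁ ∧ v ∈ B₂

/-- A leaf block: a block containing exactly one cutvertex (a leaf of the
block-cut forest). -/
def IsLeafBlock {V : Type*} (G : SimpleGraph V) (B : Set V) : Prop :=
  IsBlock G B ∧ ∃! w, w ∈ B ∧ IsCutvertex G w

/-- A terminal of type 1: a cutvertex having at least two leaf blocks as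
children in the rooted block-cut forest. -/
def TerminalType1 {V : Type*} (G : SimpleGraph V) (v : V) : Prop :=
  IsCutvertex G v ∧ ∃ B₁ B₂ : Set V, B₁ ≠ B₂ ∧ IsLeafBlock G B₁ ∧ IsLeafBlock G B₂ ∧
    v ∈ B₁ ∧ v ∈ B₂

/-- A terminal of type 2: a cutvertex `x` that is the great-grandparent of some
leaf block in the rooted block-cut forest; equivalently, there are a cutvertex
`w ≠ x`, a block `B'` containing both `x` and `w`, and a leaf block `B ≠ B'`
containing `w`. -/
def TerminalType2 {V : Type*} (G : SimpleGraph V) (x : V) : Prop :=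
  IsCutvertex G x ∧ ∃ (w : V) (B B' : Set V), IsCutvertex G w ∧ x ≠ w ∧
    IsBlock G B' ∧ x ∈ B' ∧ w ∈ B' ∧ IsLeafBlock G B ∧ w ∈ B ∧ B ≠ B'

/-- The disjoint union of `s` copies of the path on `r` vertices. -/
def multiPath (s r : ℕ) : SimpleGraph (Fin s × Fin r) where
  Adj x y := x.1 = y.1 ∧ (SimpleGraph.pathGraph r).Adj x.2 y.2
  symm := ⟨by rintro ⟨a, i⟩ ⟨b, j⟩ ⟨h1, h2⟩; exact ⟨h1.symm, h2.symm⟩⟩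
  loopless := ⟨by rintro ⟨a, i⟩ ⟨_, h2⟩; exact (SimpleGraph.pathGraph r).loopless.irrefl i h2⟩

namespace TerminalAux
variable {V : Type*} {F : SimpleGraph V}

lemma reach_chain (S : Set V) (c : ℕ → V) (m : ℕ) (hmem : ∀ i, i ≤ m → c i ∈ S)
    (hadj : ∀ i, i < m → F.Adj (c i) (c (i+1))) :
    (F.induce S).Reachable ⟨c 0, hmem 0 (Nat.zero_le _)⟩ ⟨c m, hmem m le_rfl⟩ := by
  induction m with
  | zero => exact SimpleGraph.Reachable.refl _
  | succ n ih =>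
    have h1 := ih (fun i hi => hmem i (hi.trans (Nat.le_succ n)))
      (fun i hi => hadj i (hi.trans_le (Nat.le_succ n)))
    exact h1.trans (SimpleGraph.Adj.reachable (by exact hadj n (Nat.lt_succ_self n)))

lemma biconnected_pair {a b : V} (hab : F.Adj a b) : IsBiconnectedSet F {a, b} := by
  refine ⟨by rw [Set.ncard_pair hab.ne], ?_, ?_⟩
  · rw [SimpleGraph.connected_iff_exists_forall_reachable]
    refine ⟨⟨a, Or.inl rfl⟩, ?_⟩
    rintro ⟨z, (rfl | rfl)⟩
    · exact SimpleGraph.Reachable.refl _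
    · exact SimpleGraph.Adj.reachable (by exact hab)
  · rintro v hv ⟨x, hx⟩ ⟨y, hy⟩
    have : x = y := by
      rcases hx with ⟨hx1, hx2⟩; rcases hy with ⟨hy1, hy2⟩
      simp only [Set.mem_singleton_iff] at hx2 hy2
      rcases hv with rfl | rfl <;> rcases hx1 with rfl | rfl <;>
        rcases hy1 with rfl | rfl <;> simp_all
    subst this
    exact SimpleGraph.Reachable.refl _

lemma exists_block_superset [Fintype V] {B : Set V} (h : IsBiconnectedSet F B) :
    ∃ B', IsBlock F B' ∧ B ⊆ B' := by
  classical
  have hfin : {C : Set V | IsBiconnectedSet F C ∧ B ⊆ C}.Finite := Set.toFinite _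
  obtain ⟨C, ⟨hC, hBC⟩, hmax⟩ := hfin.exists_maximalFor Set.ncard _ ⟨B, h, subset_rfl⟩
  refine ⟨C, ⟨hC, fun B'' hB'' hsub => ?_⟩, hBC⟩
  have hle : C.ncard ≤ B''.ncard := Set.ncard_le_ncard hsub (Set.toFinite _)
  have := hmax (j := B'') ⟨hB'', hBC.trans hsub⟩ hle
  exact Set.eq_of_subset_of_ncard_le hsub this (Set.toFinite _)

lemma edge_block [Fintype V] {a b : V} (hab : F.Adj a b) :
    ∃ B, IsBlock F B ∧ a ∈ B ∧ b ∈ B := by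
  obtain ⟨B, hB, hsub⟩ := exists_block_superset (biconnected_pair hab)
  exact ⟨B, hB, hsub (Or.inl rfl), hsub (Or.inr rfl)⟩

lemma cutvertex_of_two_blocks {v : V} {B₁ B₂ : Set V} (h₁ : IsBlock F B₁) (h₂ : IsBlock F B₂)
    (hne : B₁ ≠ B₂) (hv₁ : v ∈ B₁) (hv₂ : v ∈ B₂) : IsCutvertex F v :=
  ⟨B₁, B₂, h₁, h₂, hne, hv₁, hv₂⟩

lemma exists_adj_in_block {B : Set V} (h : IsBiconnectedSet F B) {v : V} (hv : v ∈ B) :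
    ∃ u ∈ B, F.Adj v u := by
  obtain ⟨u', hu', hne⟩ := Set.exists_ne_of_one_lt_ncard (s := B) (by have := h.1; omega) v
  obtain ⟨w⟩ := h.2.1.preconnected ⟨v, hv⟩ ⟨u', hu'⟩
  cases w with
  | nil => simp at hne
  | @cons _ x _ hadj p => exact ⟨x.1, x.2, hadj⟩

lemma index_arith {n j t : ℕ} (hj : j < n) (ht : t ≤ n - 2) (hn : 3 ≤ n) :
    (j + 1 + t) % n ≠ j := by
  intro h
  have h2 : (j + (1 + t)) % n = (j + 0) % n := by
    rw [Nat.add_zero, ← Nat.add_assoc, h, Nat.mod_eq_of_lt hj]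
  have h3 : (1 + t) ≡ 0 [MOD n] := Nat.ModEq.add_left_cancel' j h2
  have h4 : n ∣ 1 + t := Nat.modEq_zero_iff_dvd.mp h3
  have := Nat.le_of_dvd (by omega) h4
  omega

lemma cycle_biconnected [Fintype V] (n : ℕ) (hn : 3 ≤ n) (g : ℕ → V)
    (hinj : ∀ i < n, ∀ j < n, g i = g j → i = j)
    (hadj : ∀ i < n, F.Adj (g i) (g ((i+1) % n))) :
    IsBiconnectedSet F (g '' Set.Iio n) := by
  have hpos : 0 < n := by omega
  have hcard : (g '' Set.Iio n).ncard = n := by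
    have h1 : Set.Iio n = ↑(Finset.Iio n) := (Finset.coe_Iio n).symm
    have hinj' : Set.InjOn g (Set.Iio n) := fun x hx y hy h => hinj x hx y hy h
    rw [Set.ncard_image_of_injOn hinj', h1, Set.ncard_coe_finset, Nat.card_Iio]
  refine ⟨by omega, ?_, ?_⟩
  · rw [SimpleGraph.connected_iff_exists_forall_reachable]
    refine ⟨⟨g 0, ⟨0, hpos, rfl⟩⟩, ?_⟩
    rintro ⟨x, hx⟩
    obtain ⟨a, ha, rfl⟩ := hx
    have ha' : a < n := ha
    exact reach_chain (F := F) (g '' Set.Iio n) g a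
      (fun i hi => ⟨i, Set.mem_Iio.mpr (by omega), rfl⟩)
      (fun i hi => by
        have h := hadj i (by omega)
        rwa [Nat.mod_eq_of_lt (by omega)] at h)
  · rintro v hv
    obtain ⟨j, hj, rfl⟩ := hv
    have hj' : j < n := hj
    set S : Set V := (g '' Set.Iio n) \ {g j} with hS
    set c : ℕ → V := fun t => g ((j + 1 + t) % n) with hc
    have hmemS : ∀ t, t ≤ n - 2 → c t ∈ S := by
      intro t ht
      refine ⟨⟨(j+1+t) % n, Nat.mod_lt _ hpos, rfl⟩, ?_⟩
      simp only [Set.mem_singleton_iff]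
      intro h
      exact index_arith hj' ht hn (hinj _ (Nat.mod_lt _ hpos) j hj' h)
    have hadjc : ∀ t, F.Adj (c t) (c (t+1)) := by
      intro t
      have h := hadj ((j+1+t) % n) (Nat.mod_lt _ hpos)
      have he : ((j+1+t) % n + 1) % n = (j+1+(t+1)) % n := by
        rw [Nat.mod_add_mod, Nat.add_assoc]
      rwa [he] at h
    have key : ∀ a, a < n → a ≠ j → ∃ t, t ≤ n - 2 ∧ c t = g a := by
      intro a ha hane
      have hval : ∀ t, j + 1 + t = a + n → c t = g a := by
        intro t h
        show g _ = g a
        congr 1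
        rw [h, Nat.add_mod_right, Nat.mod_eq_of_lt ha]
      have hmod : (j + 1 + ((a + n - (j+1)) % n)) % n = a := by
        rw [Nat.add_mod_mod]
        have h1 : j + 1 + (a + n - (j+1)) = a + n := by omega
        rw [h1, Nat.add_mod_right, Nat.mod_eq_of_lt ha]
      refine ⟨(a + n - (j+1)) % n, ?_, ?_⟩
      · have hlt : (a + n - (j+1)) % n < n := Nat.mod_lt _ hpos
        rcases Nat.lt_or_ge ((a + n - (j+1)) % n) (n-1) with h | h
        · omega
        · exfalso
          have he : (a + n - (j+1)) % n = n - 1 := by omega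
          rw [he] at hmod
          have h2 : j + 1 + (n-1) = j + n := by omega
          rw [h2, Nat.add_mod_right, Nat.mod_eq_of_lt hj'] at hmod
          exact hane hmod.symm
      · exact congrArg g hmod
    have reach : ∀ a (ha : a < n) (hane : a ≠ j) (hmem : g a ∈ S),
        (F.induce S).Reachable ⟨c 0, hmemS 0 (by omega)⟩ ⟨g a, hmem⟩ := by
      intro a ha hane hmem
      obtain ⟨t, ht, hct⟩ := key a ha hane
      have hr := reach_chain (F := F) S c t (fun i hi => hmemS i (hi.trans ht))
        (fun i _ => hadjc i)
      have he : (⟨c t, hmemS t ht⟩ : S) = ⟨g a, hmem⟩ := Subtype.ext hct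
      exact he ▸ hr
    rintro ⟨x, hx⟩ ⟨y, hy⟩
    obtain ⟨⟨a, ha, rfl⟩, hxne⟩ := hx
    obtain ⟨⟨b, hb, rfl⟩, hyne⟩ := hy
    have hane : a ≠ j := by rintro rfl; exact hxne rfl
    have hbne : b ≠ j := by rintro rfl; exact hyne rfl
    exact (reach a ha hane ⟨⟨a, ha, rfl⟩, hxne⟩).symm.trans
      (reach b hb hbne ⟨⟨b, hb, rfl⟩, hyne⟩)

lemma exists_low_degree [Fintype V] {d : ℕ} (hd : 2 ≤ d)
    (hblocks : ∀ B : Set V, IsBlock F B → B.ncard ≤ d)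
    (S : Set V) (hS : S.Nonempty) :
    ∃ v ∈ S, {u | u ∈ S ∧ F.Adj v u}.ncard < d := by
  classical
  by_contra hcon
  push_neg at hcon
  set A : Set ℕ := {k | ∃ f : ℕ → V, (∀ i ≤ k, f i ∈ S) ∧ (∀ i < k, F.Adj (f i) (f (i+1))) ∧
    (∀ i ≤ k, ∀ j ≤ k, f i = f j → i = j)} with hA
  obtain ⟨v0, hv0⟩ := hS
  have h0 : 0 ∈ A := ⟨fun _ => v0, fun i _ => hv0, fun i hi => by omega, fun i hi j hj _ => by omega⟩
  have bdd : BddAbove A := by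
    refine ⟨Fintype.card V, fun k hk => ?_⟩
    obtain ⟨f, _, _, hinj⟩ := hk
    have : Function.Injective (fun i : Fin (k+1) => f i.val) := by
      intro i j h
      exact Fin.ext (hinj i.val (by omega) j.val (by omega) h)
    have hc := Fintype.card_le_of_injective _ this
    rw [Fintype.card_fin] at hc
    omega
  set K := sSup A with hK
  have hKmem : K ∈ A := Nat.sSup_mem ⟨0, h0⟩ bdd
  obtain ⟨f, hfS, hfadj, hfinj⟩ := hKmem
  have hext : ∀ y, y ∈ S → F.Adj (f 0) y → ∃ i, 1 ≤ i ∧ i ≤ K ∧ f i = y := by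
    intro y hy hadjy
    by_contra hno
    push_neg at hno
    have hyne : ∀ i, i ≤ K → f i ≠ y := by
      intro i hi
      rcases Nat.eq_zero_or_pos i with h | h
      · subst h; intro h'; exact F.irrefl (h' ▸ hadjy)
      · exact hno i h hi
    set f' : ℕ → V := fun i => if i = 0 then y else f (i - 1) with hf'
    have hmem : K + 1 ∈ A := by
      refine ⟨f', ?_, ?_, ?_⟩
      · intro i hi
        by_cases h : i = 0
        · simpa [f', h] using hy
        · simpa [f', h] using hfS (i-1) (by omega)
      · intro i hi
        by_cases h : i = 0
        · subst h
          simpa [f'] using hadjy.symm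
        · have e1 : i - 1 + 1 = i := by omega
          have h2 := hfadj (i-1) (by omega)
          rw [e1] at h2
          simpa [f', h, show i + 1 ≠ 0 by omega] using h2
      · intro i hi j hj hij
        by_cases h : i = 0 <;> by_cases h' : j = 0
        · omega
        · exfalso; simp [f', h, h'] at hij
          exact hyne (j-1) (by omega) hij.symm
        · exfalso; simp [f', h, h'] at hij
          exact hyne (i-1) (by omega) hij
        · simp [f', h, h'] at hij
          have := hfinj (i-1) (by omega) (j-1) (by omega) hij
          omega
    have := le_csSup bdd hmem
    omega
  set N : Set V := {u | u ∈ S ∧ F.Adj (f 0) u} with hN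
  have hdN : d ≤ N.ncard := hcon (f 0) (hfS 0 (by omega))
  set I : Finset ℕ := (Finset.Icc 1 K).filter (fun i => F.Adj (f 0) (f i)) with hI
  have hsub : N ⊆ ↑(I.image f) := by
    rintro y ⟨hyS, hyadj⟩
    obtain ⟨i, h1, h2, rfl⟩ := hext y hyS hyadj
    exact Finset.mem_coe.mpr (Finset.mem_image.mpr ⟨i, Finset.mem_filter.mpr
      ⟨Finset.mem_Icc.mpr ⟨h1, h2⟩, hyadj⟩, rfl⟩)
  have h1 : N.ncard ≤ (I.image f).card := by
    rw [← Set.ncard_coe_finset]; exact Set.ncard_le_ncard hsub (Set.toFinite _)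
  have h2 : (I.image f).card ≤ I.card := Finset.card_image_le
  have hIne : I.Nonempty := Finset.card_pos.mp (by omega)
  set m := I.max' hIne with hm
  have hmI : m ∈ I := I.max'_mem hIne
  have hmK : 1 ≤ m ∧ m ≤ K := Finset.mem_Icc.mp (Finset.mem_filter.mp hmI).1
  have hadjm : F.Adj (f 0) (f m) := (Finset.mem_filter.mp hmI).2
  have hIsub : I ⊆ Finset.Icc 1 m := by
    intro i hi
    exact Finset.mem_Icc.mpr ⟨(Finset.mem_Icc.mp (Finset.mem_filter.mp hi).1).1, I.le_max' i hi⟩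
  have hdm : d ≤ m := by
    have := Finset.card_le_card hIsub
    have hcard : (Finset.Icc 1 m).card = m := by rw [Nat.card_Icc]; omega
    omega
  -- build the cycle
  have hcyc : IsBiconnectedSet F (f '' Set.Iio (m+1)) := by
    refine cycle_biconnected (m+1) (by omega) f ?_ ?_
    · intro i hi j hj h
      exact hfinj i (by omega) j (by omega) h
    · intro i hi
      rcases Nat.lt_or_ge i m with h | h
      · have := hfadj i (by omega)
        rwa [Nat.mod_eq_of_lt (by omega)]
      · have : i = m := by omega
        subst this
        rw [Nat.mod_self]
        exact hadjm.symm
  obtain ⟨B, hB, hsubB⟩ := exists_block_superset hcyc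
  have hcard : (f '' Set.Iio (m+1)).ncard = m + 1 := by
    have h1 : Set.Iio (m+1) = ↑(Finset.Iio (m+1)) := (Finset.coe_Iio (m+1)).symm
    have hinj' : Set.InjOn f (Set.Iio (m+1)) :=
      fun x hx y hy h => hfinj x (by have : x < m + 1 := hx; omega) y
        (by have : y < m + 1 := hy; omega) h
    rw [Set.ncard_image_of_injOn hinj', h1, Set.ncard_coe_finset, Nat.card_Iio]
  have := Set.ncard_le_ncard hsubB (Set.toFinite _)
  have := hblocks B hB
  omega

lemma indep_of_large [Fintype V] {d : ℕ} (hd : 2 ≤ d)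
    (hblocks : ∀ B : Set V, IsBlock F B → B.ncard ≤ d) :
    ∀ (k : ℕ) (S : Set V), d * k < S.ncard →
      ∃ f : Fin (k+1) → V, (∀ i, f i ∈ S) ∧ Function.Injective f ∧
        ∀ i j, i ≠ j → ¬ F.Adj (f i) (f j) := by
  intro k
  induction k with
  | zero =>
    intro S hS
    obtain ⟨v, hv⟩ := Set.nonempty_of_ncard_ne_zero (s := S) (by omega)
    have hsub : ∀ i j : Fin (0+1), i = j := fun i j =>
      Fin.ext (by have := i.isLt; have := j.isLt; omega)
    exact ⟨fun _ => v, fun _ => hv, fun i j _ => hsub i j,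
      fun i j hij => (hij (hsub i j)).elim⟩
  | succ k ih =>
    intro S hS
    have hmul : d * (k+1) = d * k + d := by ring
    have hSne : S.Nonempty := Set.nonempty_of_ncard_ne_zero (s := S) (by omega)
    obtain ⟨v, hvS, hvdeg⟩ := exists_low_degree hd hblocks S hSne
    set X : Set V := insert v {u | u ∈ S ∧ F.Adj v u} with hX
    have hXcard : X.ncard ≤ d := le_trans (Set.ncard_insert_le _ _) (by omega)
    have hS' : d * k < (S \ X).ncard := by
      have h1 := Set.ncard_le_ncard_diff_add_ncard S X (Set.toFinite _)
      omega
    obtain ⟨f', hf'S, hf'inj, hf'nadj⟩ := ih (S \ X) hS'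
    have hnadj : ∀ (i' : Fin (k+1)), ¬ F.Adj v (f' i') := by
      intro i' ha
      exact (hf'S i').2 (Set.mem_insert_iff.mpr (Or.inr ⟨(hf'S i').1, ha⟩))
    refine ⟨Fin.cons v f', ?_, ?_, ?_⟩
    · intro i
      rcases Fin.eq_zero_or_eq_succ i with rfl | ⟨i', rfl⟩
      · simpa using hvS
      · simpa using (hf'S i').1
    · rw [Fin.cons_injective_iff]
      refine ⟨?_, hf'inj⟩
      rintro ⟨i', hi'⟩
      exact (hf'S i').2 (hi' ▸ Set.mem_insert _ _)
    · intro i j hij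
      rcases Fin.eq_zero_or_eq_succ i with rfl | ⟨i', rfl⟩ <;>
        rcases Fin.eq_zero_or_eq_succ j with rfl | ⟨j', rfl⟩
      · exact absurd rfl hij
      · simpa using hnadj j'
      · simp only [Fin.cons_zero, Fin.cons_succ]
        exact fun ha => hnadj i' ha.symm
      · simp only [Fin.cons_succ]
        exact hf'nadj i' j' (fun h => hij (by rw [h]))

lemma leaf_unique_cut {B : Set V} (hB : IsLeafBlock F B) {t x : V}
    (ht : t ∈ B) (htc : IsCutvertex F t) (hx : x ∈ B) (hxc : IsCutvertex F x) : x = t := by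
  obtain ⟨_, wit, hw, huniq⟩ := hB
  rw [huniq x ⟨hx, hxc⟩, huniq t ⟨ht, htc⟩]

lemma mem_of_adj_leaf [Fintype V] {B : Set V} (hB : IsLeafBlock F B) {t x y : V}
    (ht : t ∈ B) (htc : IsCutvertex F t) (hx : x ∈ B) (hxt : x ≠ t)
    (hxy : F.Adj x y) : y ∈ B := by
  obtain ⟨B', hB', hxB', hyB'⟩ := edge_block hxy
  by_cases h : B' = B
  · exact h ▸ hyB'
  · exact absurd (leaf_unique_cut hB ht htc hx
      (cutvertex_of_two_blocks hB.1 hB' (fun hh => h hh.symm) hx hxB')) hxt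

lemma terminal_data [Fintype V] {t : V} (ht : TerminalType1 F t) :
    ∃ (u w : V) (B₁ B₂ : Set V), IsLeafBlock F B₁ ∧ IsLeafBlock F B₂ ∧ B₁ ≠ B₂ ∧
      t ∈ B₁ ∧ t ∈ B₂ ∧ u ∈ B₁ ∧ w ∈ B₂ ∧ F.Adj t u ∧ F.Adj t w ∧
      ¬IsCutvertex F u ∧ ¬IsCutvertex F w := by
  obtain ⟨htc, B₁, B₂, hne, h1, h2, ht1, ht2⟩ := ht
  obtain ⟨u, hu, hau⟩ := exists_adj_in_block h1.1.1 ht1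
  obtain ⟨w, hw, haw⟩ := exists_adj_in_block h2.1.1 ht2
  refine ⟨u, w, B₁, B₂, h1, h2, hne, ht1, ht2, hu, hw, hau, haw, ?_, ?_⟩
  · intro hc; exact hau.ne' (leaf_unique_cut h1 ht1 htc hu hc)
  · intro hc; exact haw.ne' (leaf_unique_cut h2 ht2 htc hw hc)

lemma leafblocks_ne {B B' : Set V} (hB : IsLeafBlock F B) (hB' : IsLeafBlock F B')
    {t t' : V} (htB : t ∈ B) (htc : IsCutvertex F t)
    (ht'B' : t' ∈ B') (ht'c : IsCutvertex F t') (htt' : t ≠ t') : B ≠ B' := by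
  rintro rfl
  exact htt' (leaf_unique_cut hB' ht'B' ht'c htB htc)

lemma cross1 [Fintype V] {t u u' : V} {B B' : Set V}
    (hB : IsLeafBlock F B) (hB' : IsLeafBlock F B') (hBB' : B ≠ B')
    (htB : t ∈ B) (htc : IsCutvertex F t)
    (huB : u ∈ B) (hu : ¬IsCutvertex F u)
    (hu'B' : u' ∈ B') (hu' : ¬IsCutvertex F u') :
    ¬F.Adj u u' ∧ u ≠ u' := by
  have hunB' : u ∉ B' := fun h => hu (cutvertex_of_two_blocks hB.1 hB'.1 hBB' huB h)
  have hut : u ≠ t := fun h => hu (h ▸ htc)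
  refine ⟨fun hadj => ?_, fun h => hunB' (h ▸ hu'B')⟩
  exact hu' (cutvertex_of_two_blocks hB.1 hB'.1 hBB'
    (mem_of_adj_leaf hB htB htc huB hut hadj) hu'B')

lemma cross_ut [Fintype V] {t t' u : V} {B B' : Set V}
    (hB : IsLeafBlock F B) (hB' : IsLeafBlock F B')
    (htB : t ∈ B) (htc : IsCutvertex F t)
    (ht'B' : t' ∈ B') (ht'c : IsCutvertex F t') (htt' : t ≠ t')
    (huB : u ∈ B) (hu : ¬IsCutvertex F u) :
    ¬F.Adj u t' ∧ u ≠ t' := by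
  have hBB' : B ≠ B' := leafblocks_ne hB hB' htB htc ht'B' ht'c htt'
  have hunB' : u ∉ B' := fun h => hu (cutvertex_of_two_blocks hB.1 hB'.1 hBB' huB h)
  have hut : u ≠ t := fun h => hu (h ▸ htc)
  refine ⟨fun hadj => ?_, fun h => hunB' (h ▸ ht'B')⟩
  have ht'B : t' ∈ B := mem_of_adj_leaf hB htB htc huB hut hadj
  exact htt' (leaf_unique_cut hB htB htc ht'B ht'c).symm

end TerminalAux

open TerminalAux in
/-- In an `sP₃`-free graph whose blocks have at most `d` vertices, there are at
most `d(s-1)` terminals of type 1. -/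
theorem type1_terminals_bound {V : Type*} [Fintype V] (F : SimpleGraph V) (d s : ℕ)
    (hs : 1 ≤ s) (hblocks : ∀ B : Set V, IsBlock F B → B.ncard ≤ d)
    (hfree : ¬ Nonempty (multiPath s 3 ↪g F)) :
    {v : V | TerminalType1 F v}.ncard ≤ d * (s - 1) := by
  by_contra hcon
  push_neg at hcon
  set T := {v : V | TerminalType1 F v} with hT
  have hTne : T.Nonempty := Set.nonempty_of_ncard_ne_zero (s := T) (by omega)
  have hd : 2 ≤ d := by
    obtain ⟨t, ht⟩ := hTne
    obtain ⟨_, B₁, _, _, h1, _, _, _⟩ := ht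
    have h2 := hblocks B₁ h1.1
    have h3 := h1.1.1.1
    omega
  obtain ⟨k, rfl⟩ : ∃ k, s = k + 1 := ⟨s - 1, by omega⟩
  have hcon' : d * k < T.ncard := by
    have he : k + 1 - 1 = k := by omega
    rwa [he] at hcon
  obtain ⟨f, hfT, hfinj, hfnadj⟩ := indep_of_large hd hblocks k T hcon'
  have hterm : ∀ i, TerminalType1 F (f i) := fun i => hfT i
  have hdata := fun i => terminal_data (F := F) (hterm i)
  choose u w B₁ B₂ hB₁ hB₂ hBne htB₁ htB₂ huB₁ hwB₂ hadju hadjw hucut hwcut using hdata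
  have hfc : ∀ i, IsCutvertex F (f i) := fun i => (hterm i).1
  have hfne : ∀ i j : Fin (k+1), i ≠ j → f i ≠ f j := fun i j hij h => hij (hfinj h)
  -- cross facts
  have hB₁ne : ∀ i j, i ≠ j → B₁ i ≠ B₁ j := fun i j hij =>
    leafblocks_ne (hB₁ i) (hB₁ j) (htB₁ i) (hfc i) (htB₁ j) (hfc j) (hfne i j hij)
  have hB₂ne : ∀ i j, i ≠ j → B₂ i ≠ B₂ j := fun i j hij =>
    leafblocks_ne (hB₂ i) (hB₂ j) (htB₂ i) (hfc i) (htB₂ j) (hfc j) (hfne i j hij)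
  have hB₁₂ne : ∀ i j, i ≠ j → B₁ i ≠ B₂ j := fun i j hij =>
    leafblocks_ne (hB₁ i) (hB₂ j) (htB₁ i) (hfc i) (htB₂ j) (hfc j) (hfne i j hij)
  have Huu : ∀ i j, i ≠ j → ¬F.Adj (u i) (u j) ∧ u i ≠ u j := fun i j hij =>
    cross1 (hB₁ i) (hB₁ j) (hB₁ne i j hij) (htB₁ i) (hfc i) (huB₁ i) (hucut i)
      (huB₁ j) (hucut j)
  have Hww : ∀ i j, i ≠ j → ¬F.Adj (w i) (w j) ∧ w i ≠ w j := fun i j hij =>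
    cross1 (hB₂ i) (hB₂ j) (hB₂ne i j hij) (htB₂ i) (hfc i) (hwB₂ i) (hwcut i)
      (hwB₂ j) (hwcut j)
  have Huw : ∀ i j, i ≠ j → ¬F.Adj (u i) (w j) ∧ u i ≠ w j := fun i j hij =>
    cross1 (hB₁ i) (hB₂ j) (hB₁₂ne i j hij) (htB₁ i) (hfc i) (huB₁ i) (hucut i)
      (hwB₂ j) (hwcut j)
  have Huwself : ∀ i, ¬F.Adj (u i) (w i) ∧ u i ≠ w i := fun i =>
    cross1 (hB₁ i) (hB₂ i) (hBne i) (htB₁ i) (hfc i) (huB₁ i) (hucut i)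
      (hwB₂ i) (hwcut i)
  have Hut : ∀ i j, i ≠ j → ¬F.Adj (u i) (f j) ∧ u i ≠ f j := fun i j hij =>
    cross_ut (hB₁ i) (hB₁ j) (htB₁ i) (hfc i) (htB₁ j) (hfc j) (hfne i j hij)
      (huB₁ i) (hucut i)
  have Hwt : ∀ i j, i ≠ j → ¬F.Adj (w i) (f j) ∧ w i ≠ f j := fun i j hij =>
    cross_ut (hB₂ i) (hB₁ j) (htB₂ i) (hfc i) (htB₁ j) (hfc j) (hfne i j hij)
      (hwB₂ i) (hwcut i)
  have Huf : ∀ i, u i ≠ f i := fun i => (hadju i).ne'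
  have Hwf : ∀ i, w i ≠ f i := fun i => (hadjw i).ne'
  -- the embedding
  let e : Fin (k+1) × Fin 3 → V := fun p => ![u p.1, f p.1, w p.1] p.2
  have he0 : ∀ i, e (i, 0) = u i := fun i => rfl
  have he1 : ∀ i, e (i, 1) = f i := fun i => rfl
  have he2 : ∀ i, e (i, 2) = w i := fun i => rfl
  have hpath01 : (SimpleGraph.pathGraph 3).Adj 0 1 := by
    simp [SimpleGraph.pathGraph_adj]
  have hpath12 : (SimpleGraph.pathGraph 3).Adj 1 2 := by
    simp [SimpleGraph.pathGraph_adj]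
  refine hfree ⟨⟨⟨e, ?_⟩, ?_⟩⟩
  · rintro ⟨i, a⟩ ⟨j, b⟩ h
    by_cases hij : i = j
    · subst hij
      fin_cases a <;> fin_cases b
      · rfl
      · exact absurd h (Huf i)
      · exact absurd h (Huwself i).2
      · exact absurd (h.symm : u i = f i) (Huf i)
      · rfl
      · exact absurd (h.symm : w i = f i) (Hwf i)
      · exact absurd (h.symm : u i = w i) (Huwself i).2
      · exact absurd h (Hwf i)
      · rfl
    · exfalso
      fin_cases a <;> fin_cases b
      · exact (Huu i j hij).2 h
      · exact (Hut i j hij).2 h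
      · exact (Huw i j hij).2 h
      · exact (Hut j i (Ne.symm hij)).2 (h.symm : u j = f i)
      · exact hfne i j hij h
      · exact (Hwt j i (Ne.symm hij)).2 (h.symm : w j = f i)
      · exact (Huw j i (Ne.symm hij)).2 (h.symm : u j = w i)
      · exact (Hwt i j hij).2 h
      · exact (Hww i j hij).2 h
  · rintro ⟨i, a⟩ ⟨j, b⟩
    by_cases hij : i = j
    · subst hij
      constructor
      · intro h
        refine ⟨rfl, ?_⟩
        fin_cases a <;> fin_cases b
        · exact absurd h (F.loopless.irrefl _)
        · exact hpath01
        · exact absurd h (Huwself i).1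
        · exact hpath01.symm
        · exact absurd h (F.loopless.irrefl _)
        · exact hpath12
        · exact absurd (h.symm : F.Adj (u i) (w i)) (Huwself i).1
        · exact hpath12.symm
        · exact absurd h (F.loopless.irrefl _)
      · rintro ⟨-, h⟩
        fin_cases a <;> fin_cases b
        · exact absurd h (by simp [SimpleGraph.pathGraph_adj])
        · exact (hadju i).symm
        · exact absurd h (by simp [SimpleGraph.pathGraph_adj])
        · exact hadju i
        · exact absurd h (by simp [SimpleGraph.pathGraph_adj])
        · exact hadjw i
        · exact absurd h (by simp [SimpleGraph.pathGraph_adj])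
        · exact (hadjw i).symm
        · exact absurd h (by simp [SimpleGraph.pathGraph_adj])
    · constructor
      · intro h
        exfalso
        fin_cases a <;> fin_cases b
        · exact (Huu i j hij).1 h
        · exact (Hut i j hij).1 h
        · exact (Huw i j hij).1 h
        · exact (Hut j i (Ne.symm hij)).1 (h.symm : F.Adj (u j) (f i))
        · exact hfnadj i j hij h
        · exact (Hwt j i (Ne.symm hij)).1 (h.symm : F.Adj (w j) (f i))
        · exact (Huw j i (Ne.symm hij)).1 (h.symm : F.Adj (u j) (w i))
        · exact (Hwt i j hij).1 h
        · exact (Hww i j hij).1 h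
      · rintro ⟨h, -⟩
        exact absurd h hij
end
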